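/- arXiv:2301.13643 — 10 statements merged into one kernel-verified Lean document; each statement's English description precedes it below -/
import Mathlib

section
/- Let (b_k^{(1)})_{k\ge0} and (b_k^{(2)})_{k\ge0} be sequences of nonzero complex numbers and let \theta be the linear map on complex polynomials defined by \theta(x^n) = (b_n^{(2)}/b_n^{(1)}) x^n for all n \ge 0. Then for every polynomial p and every x, \theta(p)(x) = \sum_{k=0}^{\deg p} (\phi_k/k!) x^k p^{(k)}(x), where \phi_k = (-1)^k \sum_{m=0}^{k} ((-k)_m/m!) (b_m^{(2)}/b_m^{(1)}) = \sum_{m=0}^{k} (-1)^{k-m} \binom{k}{m} (b_m^{(2)}/b_m^{(1)}) and p^{(k)} denotes the k-th derivative of p. -/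
open Polynomial Finset

lemma alt_sum_C (N : ℕ) :
    ∑ j ∈ Finset.range (N + 1), (-1 : ℂ) ^ j * (N.choose j : ℂ) = if N = 0 then 1 else 0 := by
  have h := Int.alternating_sum_range_choose (n := N)
  have h2 := congrArg (fun z : ℤ => (z : ℂ)) h
  push_cast at h2
  split_ifs with hN <;> simp_all

lemma binom_inv (f : ℕ → ℂ) (n : ℕ) :
    ∑ k ∈ Finset.range (n + 1), (n.choose k : ℂ) *
      ∑ m ∈ Finset.range (k + 1), (-1 : ℂ) ^ (k - m) * (k.choose m : ℂ) * f m = f n := by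
  have h1 : ∀ k ∈ Finset.range (n + 1),
      (n.choose k : ℂ) * ∑ m ∈ Finset.range (k + 1), (-1:ℂ)^(k-m) * (k.choose m : ℂ) * f m
      = ∑ m ∈ Finset.range (n + 1), (n.choose k : ℂ) * ((-1:ℂ)^(k-m) * (k.choose m : ℂ) * f m) := by
    intro k hk
    rw [Finset.mul_sum]
    apply Finset.sum_subset
    · intro m hm; simp only [Finset.mem_range] at *; omega
    · intro m hm hmk
      have : k.choose m = 0 := Nat.choose_eq_zero_of_lt (by simp only [Finset.mem_range] at *; omega)
      simp [this]
  rw [Finset.sum_congr rfl h1, Finset.sum_comm]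
  have h2 : ∀ m ∈ Finset.range (n + 1),
      (∑ k ∈ Finset.range (n + 1), (n.choose k : ℂ) * ((-1:ℂ)^(k-m) * (k.choose m : ℂ) * f m))
      = if m = n then f n else 0 := by
    intro m hm
    have hmn : m ≤ n := by simpa [Nat.lt_succ_iff] using hm
    rw [Finset.range_eq_Ico, ← Finset.sum_Ico_consecutive _ (Nat.zero_le m) (by omega)]
    have hz : ∑ k ∈ Finset.Ico 0 m, (n.choose k : ℂ) * ((-1:ℂ)^(k-m) * (k.choose m : ℂ) * f m) = 0 := by
      apply Finset.sum_eq_zero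
      intro k hk
      have : k.choose m = 0 := Nat.choose_eq_zero_of_lt (by simp at hk; omega)
      simp [this]
    rw [hz, zero_add, Finset.sum_Ico_eq_sum_range]
    have hr : n + 1 - m = (n - m) + 1 := by omega
    rw [hr]
    have h3 : ∀ j ∈ Finset.range ((n - m) + 1),
        (n.choose (m + j) : ℂ) * ((-1:ℂ)^(m + j - m) * ((m + j).choose m : ℂ) * f m)
        = (n.choose m : ℂ) * f m * ((-1:ℂ)^j * ((n - m).choose j : ℂ)) := by
      intro j hj
      have hjn : m + j ≤ n := by simp only [Finset.mem_range] at hj; omega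
      have hcm : n.choose (m + j) * (m + j).choose m = n.choose m * (n - m).choose j := by
        have := Nat.choose_mul (n := n) (k := m + j) (s := m) (Nat.le_add_right m j)
        simpa [Nat.add_sub_cancel_left] using this
      have hcast : (n.choose (m + j) : ℂ) * ((m + j).choose m : ℂ)
          = (n.choose m : ℂ) * ((n - m).choose j : ℂ) := by exact_mod_cast congrArg (Nat.cast (R := ℂ)) hcm
      have hms : m + j - m = j := by omega
      rw [hms]
      calc (n.choose (m + j) : ℂ) * ((-1:ℂ)^j * ((m + j).choose m : ℂ) * f m)
          = ((n.choose (m + j) : ℂ) * ((m + j).choose m : ℂ)) * ((-1:ℂ)^j * f m) := by ring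
        _ = ((n.choose m : ℂ) * ((n - m).choose j : ℂ)) * ((-1:ℂ)^j * f m) := by rw [hcast]
        _ = (n.choose m : ℂ) * f m * ((-1:ℂ)^j * ((n - m).choose j : ℂ)) := by ring
    rw [Finset.sum_congr rfl h3, ← Finset.mul_sum, alt_sum_C]
    by_cases hmn' : m = n
    · subst hmn'; simp
    · have : n - m ≠ 0 := by omega
      simp [this, hmn']
  rw [Finset.sum_congr rfl h2]
  simp

lemma iter_deriv_sum (s : Finset ℕ) (g : ℕ → Polynomial ℂ) (k : ℕ) :
    Polynomial.derivative^[k] (∑ i ∈ s, g i) = ∑ i ∈ s, Polynomial.derivative^[k] (g i) := by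
  induction k with
  | zero => simp
  | succ k ih =>
    rw [Function.iterate_succ_apply', ih, derivative_sum]
    exact Finset.sum_congr rfl fun i _ => (Function.iterate_succ_apply' _ _ _).symm

lemma brenke_aux (f : ℕ → ℂ)
    (θ : Polynomial ℂ →ₗ[ℂ] Polynomial ℂ)
    (hθ : ∀ n : ℕ, θ (X ^ n) = Polynomial.C (f n) * X ^ n)
    (p : Polynomial ℂ) (x : ℂ) :
    (θ p).eval x =
      ∑ k ∈ Finset.range (p.natDegree + 1),
        ((∑ m ∈ Finset.range (k + 1),
            (-1 : ℂ) ^ (k - m) * (k.choose m : ℂ) * f m) / (Nat.factorial k : ℂ))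
          * x ^ k * ((Polynomial.derivative^[k] p).eval x) := by
  set d := p.natDegree with hd
  have hp : p = ∑ n ∈ Finset.range (d + 1), Polynomial.C (p.coeff n) * X ^ n :=
    p.as_sum_range_C_mul_X_pow
  have hL : (θ p).eval x = ∑ n ∈ Finset.range (d + 1), p.coeff n * f n * x ^ n := by
    conv_lhs => rw [hp]
    rw [map_sum, eval_finset_sum]
    refine Finset.sum_congr rfl fun n _ => ?_
    rw [show Polynomial.C (p.coeff n) * X ^ n = p.coeff n • (X ^ n : Polynomial ℂ) from
      (Polynomial.smul_eq_C_mul _).symm, map_smul, hθ]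
    simp [mul_assoc]
  have hD : ∀ k, (Polynomial.derivative^[k] p).eval x
      = ∑ n ∈ Finset.range (d + 1), p.coeff n * (n.descFactorial k : ℂ) * x ^ (n - k) := by
    intro k
    conv_lhs => rw [hp]
    rw [iter_deriv_sum, eval_finset_sum]
    refine Finset.sum_congr rfl fun n _ => ?_
    rw [Polynomial.iterate_derivative_C_mul, Polynomial.iterate_derivative_X_pow_eq_C_mul]
    simp [mul_assoc]
  rw [hL]
  have hR : ∑ k ∈ Finset.range (d + 1),
      ((∑ m ∈ Finset.range (k + 1), (-1:ℂ)^(k-m) * (k.choose m : ℂ) * f m)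
        / (Nat.factorial k : ℂ)) * x ^ k * ((Polynomial.derivative^[k] p).eval x)
      = ∑ n ∈ Finset.range (d + 1), p.coeff n * f n * x ^ n := by
    rw [Finset.sum_congr rfl (fun k (_ : k ∈ Finset.range (d+1)) => by
      rw [hD k, Finset.mul_sum]), Finset.sum_comm]
    refine Finset.sum_congr rfl fun n hn => ?_
    have hnd : n ≤ d := by simpa [Nat.lt_succ_iff] using hn
    have hsub : Finset.range (n + 1) ⊆ Finset.range (d + 1) := by
      intro t ht; simp only [Finset.mem_range] at *; omega
    rw [← Finset.sum_subset hsub (by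
      intro k _ hk
      have : n.descFactorial k = 0 := Nat.descFactorial_eq_zero_iff_lt.mpr
        (by simp only [Finset.mem_range] at hk; omega)
      simp [this])]
    have hterm : ∀ k ∈ Finset.range (n + 1),
        ((∑ m ∈ Finset.range (k + 1), (-1:ℂ)^(k-m) * (k.choose m : ℂ) * f m)
          / (Nat.factorial k : ℂ)) * x ^ k * (p.coeff n * (n.descFactorial k : ℂ) * x ^ (n - k))
        = p.coeff n * x ^ n * ((n.choose k : ℂ) *
            ∑ m ∈ Finset.range (k + 1), (-1:ℂ)^(k-m) * (k.choose m : ℂ) * f m) := by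
      intro k hk
      have hkn : k ≤ n := by simpa [Nat.lt_succ_iff] using hk
      have hdf : (n.descFactorial k : ℂ) = (k.factorial : ℂ) * (n.choose k : ℂ) := by
        exact_mod_cast congrArg (Nat.cast (R := ℂ)) (Nat.descFactorial_eq_factorial_mul_choose n k)
      have hx : x ^ k * x ^ (n - k) = x ^ n := by
        rw [← pow_add]; congr 1; omega
      have hfac : (k.factorial : ℂ) ≠ 0 := Nat.cast_ne_zero.mpr k.factorial_ne_zero
      set Φ := ∑ m ∈ Finset.range (k + 1), (-1:ℂ)^(k-m) * (k.choose m : ℂ) * f m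
      calc Φ / (k.factorial : ℂ) * x ^ k * (p.coeff n * (n.descFactorial k : ℂ) * x ^ (n - k))
          = p.coeff n * (x ^ k * x ^ (n - k)) * ((n.descFactorial k : ℂ) / (k.factorial : ℂ) * Φ)
            := by ring
        _ = p.coeff n * x ^ n * ((n.choose k : ℂ) * Φ) := by
            rw [hx, hdf, mul_comm ((k.factorial : ℂ)) ((n.choose k : ℂ)),
              mul_div_assoc, div_self hfac, mul_one]
    rw [Finset.sum_congr rfl hterm, ← Finset.mul_sum, binom_inv f n]
    ring
  exact hR.symm

/-- XD-expansion of the transfer operator `θ` between two Brenke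
polynomial sets: if `θ (X^n) = (b₂ₙ/b₁ₙ) X^n` for all `n`, then for every
polynomial `p` and point `x`,
`θ(p)(x) = ∑_{k=0}^{deg p} (φ_k/k!) x^k p^{(k)}(x)` where
`φ_k = ∑_{m=0}^{k} (-1)^{k-m} (k choose m) (b₂ₘ/b₁ₘ)`. -/
theorem brenke_transfer_XD_expansion
    (b1 b2 : ℕ → ℂ) (hb1 : ∀ k, b1 k ≠ 0) (hb2 : ∀ k, b2 k ≠ 0)
    (θ : Polynomial ℂ →ₗ[ℂ] Polynomial ℂ)
    (hθ : ∀ n : ℕ, θ (X ^ n) = Polynomial.C (b2 n / b1 n) * X ^ n)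
    (p : Polynomial ℂ) (x : ℂ) :
    (θ p).eval x =
      ∑ k ∈ Finset.range (p.natDegree + 1),
        ((∑ m ∈ Finset.range (k + 1),
            (-1 : ℂ) ^ (k - m) * (k.choose m : ℂ) * (b2 m / b1 m)) / (Nat.factorial k : ℂ))
          * x ^ k * ((Polynomial.derivative^[k] p).eval x) := by
  exact brenke_aux (fun m => b2 m / b1 m) θ hθ p x
end

section
/- Let \gamma, \delta \in \mathbb{C} with 0 < Re(\gamma) < Re(\delta), and let f(x) = \sum_{n=0}^{\infty} a_n x^n be a power series with complex coefficients converging for all complex |x| < 1. Then for every real x with |x| < 1, \sum_{n=0}^{\infty} a_n ((\gamma)_n/(\delta)_n) x^n = (1/\beta(\gamma, \delta-\gamma)) \int_0^1 t^{\gamma-1} (1-t)^{\delta-\gamma-1} f(xt) \, dt, where t^{\gamma-1} and (1-t)^{\delta-\gamma-1} are complex powers of positive reals and the series on the left converges. -/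
open Finset

/-- The Pochhammer symbol `(γ)_n = γ(γ+1)⋯(γ+n-1)` for a complex number. -/
noncomputable def cpoch (γ : ℂ) (n : ℕ) : ℂ := ∏ i ∈ Finset.range n, (γ + i)

/-- Euler's Beta function `β(γ,δ) = Γ(γ)Γ(δ)/Γ(γ+δ)` for complex arguments. -/
noncomputable def cbeta (γ δ : ℂ) : ℂ :=
  Complex.Gamma γ * Complex.Gamma δ / Complex.Gamma (γ + δ)

lemma re_add_nat_pos {γ : ℂ} (hγ : 0 < γ.re) (n : ℕ) : 0 < (γ + (n : ℂ)).re := by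
  simp only [Complex.add_re, Complex.natCast_re]
  positivity

lemma gamma_add_nat (γ : ℂ) (hγ : 0 < γ.re) (n : ℕ) :
    Complex.Gamma (γ + n) = cpoch γ n * Complex.Gamma γ := by
  induction n with
  | zero => simp [cpoch]
  | succ n ih =>
    have hne : γ + (n : ℂ) ≠ 0 := by
      intro h
      have := re_add_nat_pos hγ n
      rw [h] at this; simp at this
    have e : γ + ((n + 1 : ℕ) : ℂ) = (γ + n) + 1 := by push_cast; ring
    rw [e, Complex.Gamma_add_one _ hne, ih]
    simp only [cpoch, Finset.prod_range_succ]
    ring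

lemma cpoch_ne_zero (γ : ℂ) (hγ : 0 < γ.re) (n : ℕ) : cpoch γ n ≠ 0 := by
  refine Finset.prod_ne_zero_iff.2 fun i _ => ?_
  intro h
  have := re_add_nat_pos hγ i
  rw [h] at this; simp at this

lemma gamma_ne_zero_of_re_pos {γ : ℂ} (hγ : 0 < γ.re) : Complex.Gamma γ ≠ 0 := by
  apply Complex.Gamma_ne_zero
  intro m h
  rw [h] at hγ
  simp only [Complex.neg_re, Complex.natCast_re] at hγ
  have : (0:ℝ) ≤ (m:ℝ) := Nat.cast_nonneg m
  linarith

lemma beta_shift (γ δ : ℂ) (hγ : 0 < γ.re) (hγδ : γ.re < δ.re) (n : ℕ) :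
    Complex.betaIntegral (γ + n) (δ - γ) =
      cpoch γ n / cpoch δ n * Complex.betaIntegral γ (δ - γ) := by
  have hδ : 0 < δ.re := hγ.trans hγδ
  have hδγ : 0 < (δ - γ).re := by simp only [Complex.sub_re]; linarith
  have h1 := Complex.Gamma_mul_Gamma_eq_betaIntegral (re_add_nat_pos hγ n) hδγ
  have h2 := Complex.Gamma_mul_Gamma_eq_betaIntegral hγ hδγ
  have e1 : γ + n + (δ - γ) = δ + n := by ring
  have e2 : γ + (δ - γ) = δ := by ring
  rw [e1, gamma_add_nat γ hγ n, gamma_add_nat δ hδ n] at h1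
  rw [e2] at h2
  have hΓδ : Complex.Gamma δ ≠ 0 := gamma_ne_zero_of_re_pos hδ
  have hpδ : cpoch δ n ≠ 0 := cpoch_ne_zero δ hδ n
  have key : Complex.Gamma δ * (Complex.betaIntegral (γ + n) (δ - γ) * cpoch δ n) =
      Complex.Gamma δ * (cpoch γ n * Complex.betaIntegral γ (δ - γ)) := by
    linear_combination cpoch γ n * h2 - h1
  have key2 := mul_left_cancel₀ hΓδ key
  field_simp
  linear_combination key2

/-- integral representation of the hypergeometric transfer
operator `θ(xⁿ) = ((γ)ₙ/(δ)ₙ) xⁿ` applied to an analytic function on the unit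
disc. -/
theorem hypergeometric_transfer_integral_rep
    (γ δ : ℂ) (hγ : 0 < γ.re) (hγδ : γ.re < δ.re)
    (a : ℕ → ℂ) (hconv : ∀ z : ℂ, ‖z‖ < 1 → Summable (fun n => a n * z ^ n))
    (x : ℝ) (hx : |x| < 1) :
    HasSum (fun n => a n * (cpoch γ n / cpoch δ n) * (x : ℂ) ^ n)
      ((cbeta γ (δ - γ))⁻¹ *
        ∫ t in (0:ℝ)..1, (t : ℂ) ^ (γ - 1) * ((1 - t : ℝ) : ℂ) ^ (δ - γ - 1) *
          ∑' n, a n * ((x * t : ℝ) : ℂ) ^ n) := by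
  have hδ : 0 < δ.re := hγ.trans hγδ
  have hδγ : 0 < (δ - γ).re := by simp only [Complex.sub_re]; linarith
  set base : ℝ → ℂ := fun t => (t : ℂ) ^ (γ - 1) * ((1 - t : ℝ) : ℂ) ^ (δ - γ - 1) with hbase
  set F : ℕ → ℝ → ℂ := fun n t => base t * (a n * ((x * t : ℝ) : ℂ) ^ n) with hF
  -- integrability of the shifted beta integrands
  have hbase_int : ∀ u : ℂ, 0 < u.re →
      MeasureTheory.IntegrableOn
        (fun t : ℝ => (t : ℂ) ^ (u - 1) * ((1 - t : ℝ) : ℂ) ^ (δ - γ - 1))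
        (Set.Ioc 0 1) := by
    intro u hu
    have h := Complex.betaIntegral_convergent hu hδγ
    rw [intervalIntegrable_iff_integrableOn_Ioc_of_le zero_le_one] at h
    simpa using h
  -- pointwise identity on (0,1]
  have hptw : ∀ n : ℕ, ∀ t ∈ Set.Ioc (0:ℝ) 1,
      (a n * (x : ℂ) ^ n) * ((t : ℂ) ^ (γ + n - 1) * ((1 - t : ℝ) : ℂ) ^ (δ - γ - 1))
        = F n t := by
    intro n t ht
    have ht0 : (t : ℂ) ≠ 0 := by
      exact_mod_cast ne_of_gt (by exact_mod_cast ht.1 : (0:ℝ) < t)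
    have e : γ + (n : ℂ) - 1 = (γ - 1) + (n : ℂ) := by ring
    rw [e, Complex.cpow_add _ _ ht0, Complex.cpow_natCast]
    simp only [hF, hbase]
    push_cast
    ring
  have hFint : ∀ n : ℕ, MeasureTheory.IntegrableOn (F n) (Set.Ioc 0 1) := by
    intro n
    have h := (hbase_int (γ + n) (re_add_nat_pos hγ n)).const_mul (a n * (x : ℂ) ^ n)
    exact MeasureTheory.IntegrableOn.congr_fun h (fun t ht => hptw n t ht) measurableSet_Ioc
  -- the value of each individual integral
  have hval : ∀ n : ℕ, ∫ t in Set.Ioc (0:ℝ) 1, F n t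
      = (a n * (x : ℂ) ^ n) * Complex.betaIntegral (γ + n) (δ - γ) := by
    intro n
    rw [← MeasureTheory.setIntegral_congr_fun measurableSet_Ioc (hptw n),
      MeasureTheory.integral_const_mul]
    congr 1
    rw [Complex.betaIntegral, intervalIntegral.integral_of_le zero_le_one]
    refine MeasureTheory.setIntegral_congr_fun measurableSet_Ioc fun t ht => ?_
    push_cast
    ring
  -- norm bounds
  have hBint : MeasureTheory.IntegrableOn (fun t => ‖base t‖) (Set.Ioc 0 1) := by
    have := (hbase_int γ hγ).norm
    simpa [hbase, MeasureTheory.IntegrableOn] using this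
  set B : ℝ := ∫ t in Set.Ioc (0:ℝ) 1, ‖base t‖ with hB
  have hnorm_le : ∀ n : ℕ, (∫ t in Set.Ioc (0:ℝ) 1, ‖F n t‖) ≤ (‖a n‖ * |x| ^ n) * B := by
    intro n
    have hle : ∀ t ∈ Set.Ioc (0:ℝ) 1, ‖F n t‖ ≤ (‖a n‖ * |x| ^ n) * ‖base t‖ := by
      intro t ht
      have h1 : ‖F n t‖ = ‖base t‖ * (‖a n‖ * (|x| * |t|) ^ n) := by
        simp [hF, norm_mul, norm_pow, Complex.norm_real, Real.norm_eq_abs, abs_mul]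
      rw [h1]
      have h2 : (|x| * |t|) ^ n ≤ |x| ^ n := by
        apply pow_le_pow_left₀ (by positivity)
        calc |x| * |t| ≤ |x| * 1 := by
              apply mul_le_mul_of_nonneg_left _ (abs_nonneg x)
              rw [abs_of_pos ht.1]; exact ht.2
          _ = |x| := mul_one _
      calc ‖base t‖ * (‖a n‖ * (|x| * |t|) ^ n)
          ≤ ‖base t‖ * (‖a n‖ * |x| ^ n) := by
            apply mul_le_mul_of_nonneg_left _ (norm_nonneg _)
            exact mul_le_mul_of_nonneg_left h2 (norm_nonneg _)
        _ = (‖a n‖ * |x| ^ n) * ‖base t‖ := by ring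
    calc (∫ t in Set.Ioc (0:ℝ) 1, ‖F n t‖)
        ≤ ∫ t in Set.Ioc (0:ℝ) 1, (‖a n‖ * |x| ^ n) * ‖base t‖ :=
          MeasureTheory.setIntegral_mono_on (hFint n).norm
            (hBint.const_mul _) measurableSet_Ioc hle
      _ = (‖a n‖ * |x| ^ n) * B := by rw [MeasureTheory.integral_const_mul]
  -- summability of the coefficient norms
  have hax : Summable fun n : ℕ => ‖a n‖ * |x| ^ n := by
    obtain ⟨r', hr'⟩ : ∃ r' : ℝ, r' = (|x| + 1) / 2 := ⟨_, rfl⟩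
    have h0x : 0 ≤ |x| := abs_nonneg x
    have h1 : |x| < r' := by rw [hr']; linarith
    have h2 : r' < 1 := by rw [hr']; linarith
    have h3 : 0 < r' := by rw [hr']; linarith
    have hs := hconv ((r' : ℝ) : ℂ) (by
      simpa [Complex.norm_real, Real.norm_eq_abs, abs_of_pos h3] using h2)
    have h0 := hs.tendsto_atTop_zero
    have hev : ∀ᶠ n : ℕ in Filter.atTop, ‖a n * ((r' : ℝ) : ℂ) ^ n‖ < 1 := by
      have h0n := h0.norm
      rw [norm_zero] at h0n
      exact h0n.eventually_lt_const one_pos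
    refine Summable.of_norm_bounded_eventually_nat (g := fun n => (|x| / r') ^ n)
      (summable_geometric_of_lt_one (by positivity) ((div_lt_one h3).2 h1)) ?_
    filter_upwards [hev] with n hn
    have hn' : ‖a n‖ * r' ^ n ≤ 1 := by
      have : ‖a n * ((r' : ℝ) : ℂ) ^ n‖ = ‖a n‖ * r' ^ n := by
        simp [norm_mul, norm_pow, Complex.norm_real, Real.norm_eq_abs, abs_of_pos h3]
      linarith [this ▸ hn.le]
    have heq : ‖a n‖ * |x| ^ n = (‖a n‖ * r' ^ n) * (|x| / r') ^ n := by
      rw [div_pow, mul_assoc, ← mul_div_assoc,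
        mul_div_cancel_left₀ _ (pow_ne_zero n (ne_of_gt h3))]
    rw [Real.norm_eq_abs, abs_of_nonneg (by positivity), heq]
    calc (‖a n‖ * r' ^ n) * (|x| / r') ^ n ≤ 1 * (|x| / r') ^ n :=
        mul_le_mul_of_nonneg_right hn' (by positivity)
      _ = (|x| / r') ^ n := one_mul _
  have hsum_norm : Summable fun n : ℕ => ∫ t in Set.Ioc (0:ℝ) 1, ‖F n t‖ := by
    refine Summable.of_nonneg_of_le
      (fun n => MeasureTheory.integral_nonneg fun t => norm_nonneg _)
      hnorm_le (hax.mul_right B)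
  have key := MeasureTheory.hasSum_integral_of_summable_integral_norm
    (μ := MeasureTheory.volume.restrict (Set.Ioc (0:ℝ) 1)) hFint hsum_norm
  -- rewrite the sum inside the integral
  have hR : (∫ t in Set.Ioc (0:ℝ) 1, ∑' n, F n t)
      = ∫ t in (0:ℝ)..1, (t : ℂ) ^ (γ - 1) * ((1 - t : ℝ) : ℂ) ^ (δ - γ - 1) *
          ∑' n, a n * ((x * t : ℝ) : ℂ) ^ n := by
    rw [intervalIntegral.integral_of_le zero_le_one]
    refine MeasureTheory.setIntegral_congr_fun measurableSet_Ioc fun t _ => ?_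
    simp only [hF]
    rw [tsum_mul_left]
  -- relate cbeta to the beta integral
  have hΓδ : Complex.Gamma δ ≠ 0 := gamma_ne_zero_of_re_pos hδ
  have h2 := Complex.Gamma_mul_Gamma_eq_betaIntegral hγ hδγ
  rw [show γ + (δ - γ) = δ by ring] at h2
  have hcb : cbeta γ (δ - γ) = Complex.betaIntegral γ (δ - γ) := by
    rw [cbeta, show γ + (δ - γ) = δ by ring, h2, mul_div_cancel_left₀ _ hΓδ]
  have hcb0 : cbeta γ (δ - γ) ≠ 0 := by
    rw [cbeta, show γ + (δ - γ) = δ by ring]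
    exact div_ne_zero (mul_ne_zero (gamma_ne_zero_of_re_pos hγ)
      (gamma_ne_zero_of_re_pos hδγ)) hΓδ
  have final := key.mul_left (cbeta γ (δ - γ))⁻¹
  rw [hR] at final
  have heqf : (fun n : ℕ => (cbeta γ (δ - γ))⁻¹ * ∫ t in Set.Ioc (0:ℝ) 1, F n t)
      = fun n : ℕ => a n * (cpoch γ n / cpoch δ n) * (x : ℂ) ^ n := by
    funext n
    rw [hval n, beta_shift γ δ hγ hγδ n, ← hcb]
    field_simp [hcb0]
  rw [heqf] at final
  exact final
end

section
/- Let \mu_1, \mu_2 be real numbers with -1/2 < \mu_1 < \mu_2. Then for every n \in \mathbb{N}, \int_{-1}^{1} t^n |t|^{2\mu_1} (1-t)^{\mu_2-\mu_1-1} (1+t)^{\mu_2-\mu_1} \, dt = \beta(\mu_1 + 1/2, \mu_2 - \mu_1) \cdot \gamma_{\mu_1}(n)/\gamma_{\mu_2}(n). -/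
open Finset MeasureTheory intervalIntegral Set

/-- The Dunkl generalized factorial: `γ_μ(2p+ε) = 2^(2p+ε) p! (μ+1/2)_{p+ε}`
for `ε ∈ {0,1}`. -/
noncomputable def dunklGamma (μ : ℝ) (n : ℕ) : ℝ :=
  2 ^ n * (Nat.factorial (n / 2) : ℝ) *
    ∏ i ∈ Finset.range (n / 2 + n % 2), (μ + 1 / 2 + i)

/-- Euler's Beta function `β(x,y) = Γ(x)Γ(y)/Γ(x+y)`. -/
noncomputable def realBeta (x y : ℝ) : ℝ :=
  Real.Gamma x * Real.Gamma y / Real.Gamma (x + y)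

lemma aux_gamma_add_nat {x : ℝ} (hx : 0 < x) (k : ℕ) :
    Real.Gamma (x + k) = Real.Gamma x * ∏ i ∈ Finset.range k, (x + i) := by
  induction k with
  | zero => simp
  | succ m ih =>
    have hxm : (0:ℝ) < x + m := by positivity
    have e : (x + (m + 1 : ℕ) : ℝ) = (x + m) + 1 := by push_cast; ring
    rw [e, Real.Gamma_add_one hxm.ne', ih, Finset.prod_range_succ]
    push_cast
    ring

lemma aux_beta_integrable {s t : ℝ} (hs : 0 < s) (ht : 0 < t) :
    IntervalIntegrable (fun x : ℝ => x ^ (s-1) * (1-x) ^ (t-1)) volume 0 1 := by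
  apply IntervalIntegrable.trans (b := (1/2 : ℝ))
  · apply (intervalIntegrable_rpow' (by linarith)).mul_continuousOn
    apply ContinuousOn.rpow_const (continuousOn_const.sub continuousOn_id)
    intro x hx
    rw [Set.uIcc_of_le (by norm_num : (0:ℝ) ≤ 1/2)] at hx
    left
    have := hx.2
    intro hc
    simp only [Pi.sub_apply, id] at hc
    nlinarith [hx.2]
  · have h1 : IntervalIntegrable (fun x : ℝ => (1-x) ^ (t-1)) volume (1/2) 1 := by
      have h0 := (intervalIntegrable_rpow' (r := t-1) (by linarith) (a := 0) (b := 1/2)).comp_sub_left 1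
      norm_num at h0
      exact h0.symm
    have heq : (fun x : ℝ => x ^ (s-1) * (1-x) ^ (t-1))
        = fun x : ℝ => (1-x) ^ (t-1) * x ^ (s-1) := by funext x; ring
    rw [heq]
    apply h1.mul_continuousOn
    apply ContinuousOn.rpow_const continuousOn_id
    intro x hx
    rw [Set.uIcc_of_le (by norm_num : (1/2:ℝ) ≤ 1)] at hx
    left
    simp only [id]
    nlinarith [hx.1]

lemma aux_beta_eval {s t : ℝ} (hs : 0 < s) (ht : 0 < t) :
    ∫ x in (0:ℝ)..1, x ^ (s-1) * (1-x) ^ (t-1)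
      = Real.Gamma s * Real.Gamma t / Real.Gamma (s + t) := by
  have h1 : Complex.betaIntegral s t
      = ((∫ x in (0:ℝ)..1, x ^ (s-1) * (1-x) ^ (t-1) : ℝ) : ℂ) := by
    rw [Complex.betaIntegral, ← intervalIntegral.integral_ofReal]
    apply intervalIntegral.integral_congr
    intro x hx
    rw [Set.uIcc_of_le (by norm_num : (0:ℝ) ≤ 1)] at hx
    push_cast
    rw [Complex.ofReal_cpow hx.1, Complex.ofReal_cpow (by linarith [hx.2] : (0:ℝ) ≤ 1 - x)]
    push_cast
    ring
  have h2 := Complex.Gamma_mul_Gamma_eq_betaIntegral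
      (s := (s:ℂ)) (t := (t:ℂ)) (by simpa using hs) (by simpa using ht)
  rw [h1] at h2
  have h3 : ((s:ℂ) + t) = ((s + t : ℝ) : ℂ) := by push_cast; ring
  rw [h3, Complex.Gamma_ofReal, Complex.Gamma_ofReal, Complex.Gamma_ofReal] at h2
  have h4 : Real.Gamma s * Real.Gamma t
      = Real.Gamma (s + t) * ∫ x in (0:ℝ)..1, x ^ (s-1) * (1-x) ^ (t-1) := by
    exact_mod_cast h2
  have h5 : Real.Gamma (s + t) ≠ 0 := (Real.Gamma_pos_of_pos (by linarith)).ne'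
  field_simp
  linarith [h4]

/-- for `-1/2 < μ₁ < μ₂` and every `n ∈ ℕ`,
`∫_{-1}^{1} tⁿ |t|^{2μ₁} (1-t)^{μ₂-μ₁-1} (1+t)^{μ₂-μ₁} dt
  = β(μ₁+1/2, μ₂-μ₁) ⋅ γ_{μ₁}(n)/γ_{μ₂}(n)`. -/
theorem dunkl_moment_integral
    (μ1 μ2 : ℝ) (h1 : -(1/2) < μ1) (h2 : μ1 < μ2) (n : ℕ) :
    ∫ t in (-1:ℝ)..1,
        t ^ n * |t| ^ (2 * μ1) * (1 - t) ^ (μ2 - μ1 - 1) * (1 + t) ^ (μ2 - μ1) =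
      realBeta (μ1 + 1/2) (μ2 - μ1) * (dunklGamma μ1 n / dunklGamma μ2 n) := by
  set a : ℝ := μ2 - μ1 with ha_def
  have ha : 0 < a := sub_pos.mpr h2
  set c : ℝ := μ1 + 1/2 with hc_def
  have hc : 0 < c := by rw [hc_def]; linarith
  set k : ℕ := n / 2 + n % 2 with hk_def
  have hn2 : n + n % 2 = 2 * k := by omega
  set h : ℝ → ℝ := fun t => t ^ n * |t| ^ (2 * μ1) * (1 - t) ^ (a - 1) * (1 + t) ^ a
    with hh_def
  set g : ℝ → ℝ := fun u => u ^ (c + (k:ℝ) - 1) * (1 - u) ^ (a - 1) with hg_def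
  -- integrabilities
  have hcont1 : ContinuousOn (fun x : ℝ => x ^ n * (1+x) ^ a) (Set.uIcc (0:ℝ) 1) := by
    apply (continuousOn_pow n).mul
    apply ContinuousOn.rpow_const (continuousOn_const.add continuousOn_id)
    intro x hx
    rw [Set.uIcc_of_le (by norm_num : (0:ℝ) ≤ 1)] at hx
    left; intro hcon; simp only [Pi.add_apply, id] at hcon; nlinarith [hx.1]
  have hb1 := aux_beta_integrable (s := 2*μ1 + 1) (t := a) (by linarith) ha
  rw [show (2*μ1 + 1 - 1) = 2*μ1 by ring] at hb1
  have hint1 : IntervalIntegrable h volume 0 1 := by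
    have hm := hb1.mul_continuousOn hcont1
    rw [intervalIntegrable_iff] at hm ⊢
    apply hm.congr_fun _ measurableSet_uIoc
    intro x hx
    rw [Set.uIoc_of_le (by norm_num : (0:ℝ) ≤ 1)] at hx
    simp only [hh_def]
    rw [abs_of_pos hx.1]
    ring
  have hcont2 : ContinuousOn (fun x : ℝ => (-x) ^ n * (1+x) ^ (a-1)) (Set.uIcc (0:ℝ) 1) := by
    apply ContinuousOn.mul
    · exact (continuousOn_id.neg.pow n)
    apply ContinuousOn.rpow_const (continuousOn_const.add continuousOn_id)
    intro x hx
    rw [Set.uIcc_of_le (by norm_num : (0:ℝ) ≤ 1)] at hx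
    left; intro hcon; simp only [Pi.add_apply, id] at hcon; nlinarith [hx.1]
  have hb2 := aux_beta_integrable (s := 2*μ1 + 1) (t := a + 1) (by linarith) (by linarith)
  rw [show (2*μ1 + 1 - 1) = 2*μ1 by ring, show (a + 1 - 1) = a by ring] at hb2
  have hint2 : IntervalIntegrable (fun x => h (-x)) volume 0 1 := by
    have hm := hb2.mul_continuousOn hcont2
    rw [intervalIntegrable_iff] at hm ⊢
    apply hm.congr_fun _ measurableSet_uIoc
    intro x hx
    rw [Set.uIoc_of_le (by norm_num : (0:ℝ) ≤ 1)] at hx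
    simp only [hh_def]
    rw [abs_neg, abs_of_pos hx.1,
      show (1 : ℝ) - -x = 1 + x by ring, show (1:ℝ) + -x = 1 - x by ring]
    ring
  have hint3 : IntervalIntegrable h volume (-1) 0 := by
    rw [IntervalIntegrable.iff_comp_neg]
    norm_num
    exact hint2.symm
  -- key pointwise identity
  have key : ∀ x ∈ Set.Ioc (0:ℝ) 1, h (-x) + h x = (2*x) • g (x^2) := by
    intro x hx
    obtain ⟨hx0, hx1⟩ := hx
    have hy : (0:ℝ) ≤ 1 - x := by linarith
    have hz : (0:ℝ) < 1 + x := by linarith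
    have e1 : (1 - x : ℝ) ^ a = (1-x) ^ (a-1) * (1-x) := by
      rcases eq_or_lt_of_le hy with h0 | h0
      · rw [← h0, Real.zero_rpow ha.ne']; ring
      · have := Real.rpow_add_one h0.ne' (a-1)
        rw [show a - 1 + 1 = a by ring] at this
        exact this
    have e2 : (1 + x : ℝ) ^ a = (1+x) ^ (a-1) * (1+x) := by
      have := Real.rpow_add_one hz.ne' (a-1)
      rw [show a - 1 + 1 = a by ring] at this
      exact this
    have esign : ((-1:ℝ))^n * (1-x) + (1+x) = 2 * x ^ (n % 2) := by
      rcases Nat.even_or_odd n with he | ho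
      · rw [he.neg_one_pow, Nat.even_iff.mp he]; ring
      · rw [ho.neg_one_pow, Nat.odd_iff.mp ho]; ring
    have lhs_eq : h (-x) + h x
        = 2 * x ^ (n % 2) * x ^ n * x ^ (2*μ1) * (1-x) ^ (a-1) * (1+x) ^ (a-1) := by
      simp only [hh_def]
      rw [abs_neg, abs_of_pos hx0,
        show (1 : ℝ) - -x = 1 + x by ring, show (1:ℝ) + -x = 1 - x by ring,
        e1, e2, neg_pow]
      linear_combination (x ^ n * x ^ (2*μ1) * (1-x) ^ (a-1) * (1+x) ^ (a-1)) * esign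
    have e4 : ((x^2 : ℝ)) ^ (c + (k:ℝ) - 1) = x ^ (2*c + 2*(k:ℝ) - 2) := by
      rw [← Real.rpow_natCast x 2, ← Real.rpow_mul hx0.le]
      congr 1
      push_cast
      ring
    have e5 : x * x ^ (2*c + 2*(k:ℝ) - 2) = x ^ (2*μ1) * x ^ (n % 2 + n : ℕ) := by
      rw [← Real.rpow_natCast x (n % 2 + n), ← Real.rpow_add hx0,
        show x * x ^ (2*c + 2*(k:ℝ) - 2) = x ^ (1:ℝ) * x ^ (2*c + 2*(k:ℝ) - 2) by
          rw [Real.rpow_one],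
        ← Real.rpow_add hx0]
      congr 1
      have hk2 : ((n % 2 + n : ℕ) : ℝ) = 2*(k:ℝ) := by
        have : (n : ℝ) + (n % 2 : ℕ) = 2 * (k:ℝ) := by exact_mod_cast congrArg (Nat.cast : ℕ → ℝ) hn2
        push_cast at this ⊢
        linarith
      rw [hk2, hc_def]
      ring
    rw [lhs_eq]
    simp only [hg_def, smul_eq_mul]
    rw [show (1 - x^2 : ℝ) = (1-x)*(1+x) by ring, Real.mul_rpow hy hz.le, e4]
    calc 2 * x ^ (n % 2) * x ^ n * x ^ (2*μ1) * (1-x) ^ (a-1) * (1+x) ^ (a-1)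
        = 2 * (x ^ (2*μ1) * x ^ (n % 2 + n : ℕ)) * ((1-x) ^ (a-1) * (1+x) ^ (a-1)) := by
          rw [pow_add]; ring
      _ = 2 * x * (x ^ (2*c + 2*(k:ℝ) - 2) * ((1-x) ^ (a-1) * (1+x) ^ (a-1))) := by
          rw [← e5]; ring
  -- chain of integral equalities
  have step1 : (∫ t in (-1:ℝ)..1, h t)
      = (∫ x in (0:ℝ)..1, h (-x)) + ∫ x in (0:ℝ)..1, h x := by
    rw [← intervalIntegral.integral_add_adjacent_intervals hint3 hint1]
    congr 1
    rw [intervalIntegral.integral_comp_neg h]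
    norm_num
  have step2 : (∫ x in (0:ℝ)..1, h (-x)) + ∫ x in (0:ℝ)..1, h x
      = ∫ x in (0:ℝ)..1, (h (-x) + h x) :=
    (intervalIntegral.integral_add hint2 hint1).symm
  have step3 : (∫ x in (0:ℝ)..1, (h (-x) + h x))
      = ∫ x in (0:ℝ)..1, (2*x) • g (x^2) := by
    apply intervalIntegral.integral_congr_ae
    apply Filter.Eventually.of_forall
    intro x hx
    rw [Set.uIoc_of_le (by norm_num : (0:ℝ) ≤ 1)] at hx
    exact key x hx
  have hgb := aux_beta_integrable (s := c + (k:ℝ)) (t := a) (by positivity) ha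
  have step4 : (∫ x in (0:ℝ)..1, (2*x) • g (x^2)) = ∫ u in (0:ℝ)..1, g u := by
    have hsub := intervalIntegral.integral_comp_smul_deriv'''
      (f := fun x : ℝ => x^2) (f' := fun x : ℝ => 2*x) (g := g) (a := 0) (b := 1)
      ((continuous_pow 2).continuousOn)
      (fun x hx => by
        have hd : HasDerivAt (fun y : ℝ => y ^ 2) (2 * x) x := by
          simpa using hasDerivAt_pow 2 x
        exact hd.hasDerivWithinAt)
      (by
        apply ContinuousOn.mono (s := Set.Ioo (0:ℝ) 1)
        · intro u hu
          apply ContinuousAt.continuousWithinAt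
          apply ContinuousAt.mul
          · exact continuousAt_id.rpow_const (Or.inl hu.1.ne')
          · exact (continuousAt_const.sub continuousAt_id).rpow_const
              (Or.inl (by intro hcon; simp only [Pi.sub_apply, id] at hcon; nlinarith [hu.2]))
        · rintro u ⟨x, hx, rfl⟩
          have hx' : x ∈ Set.Ioo (0:ℝ) 1 := by simpa using hx
          have : x ^ 2 ∈ Set.Ioo (0:ℝ) 1 :=
            ⟨pow_pos hx'.1 2, by nlinarith [hx'.1, hx'.2]⟩
          exact this)
      (by
        rw [intervalIntegrable_iff'] at hgb
        apply hgb.mono_set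
        rintro u ⟨x, hx, rfl⟩
        rw [Set.uIcc_of_le (by norm_num : (0:ℝ) ≤ 1)] at hx ⊢
        simp only [Set.mem_Icc] at hx ⊢
        exact ⟨by positivity, by nlinarith [hx.1, hx.2]⟩)
      (by
        have hm := hint2.add hint1
        rw [intervalIntegrable_iff'] at hm
        apply hm.congr
        rw [Set.uIcc_of_le (by norm_num : (0:ℝ) ≤ 1)]
        rw [Filter.EventuallyEq, ae_restrict_iff' measurableSet_Icc, ae_iff]
        apply measure_mono_null _ (measure_singleton (0:ℝ))
        intro x hxbad
        simp only [Set.mem_setOf_eq, not_forall] at hxbad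
        obtain ⟨hxm, hne⟩ := hxbad
        by_contra hx0
        simp only [Set.mem_singleton_iff] at hx0
        exact hne (key x ⟨lt_of_le_of_ne hxm.1 (Ne.symm hx0), hxm.2⟩))
    norm_num at hsub
    exact hsub
  have step5 : (∫ u in (0:ℝ)..1, g u) = realBeta (c + (k:ℝ)) a := by
    rw [hg_def, realBeta]
    exact aux_beta_eval (by positivity) ha
  -- final algebra
  have hfact : (0:ℝ) < (Nat.factorial (n/2) : ℝ) := by positivity
  have hP2 : (0:ℝ) < ∏ i ∈ Finset.range k, (c + a + i) :=
    Finset.prod_pos (fun i _ => by positivity)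
  have hGca : (0:ℝ) < Real.Gamma (c + a) := Real.Gamma_pos_of_pos (by linarith)
  have final : realBeta (c + (k:ℝ)) a = realBeta c a * (dunklGamma μ1 n / dunklGamma μ2 n) := by
    have hprod1 : ∏ i ∈ Finset.range k, (μ1 + 1 / 2 + (i:ℝ)) = ∏ i ∈ Finset.range k, (c + i) := by
      apply Finset.prod_congr rfl
      intro i _
      rw [hc_def]
    have hprod2 : ∏ i ∈ Finset.range k, (μ2 + 1 / 2 + (i:ℝ)) = ∏ i ∈ Finset.range k, (c + a + i) := by
      apply Finset.prod_congr rfl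
      intro i _
      rw [hc_def, ha_def]
      ring
    rw [realBeta, realBeta, dunklGamma, dunklGamma, ← hk_def, hprod1, hprod2,
      show c + (k:ℝ) + a = (c + a) + (k:ℝ) by ring,
      aux_gamma_add_nat hc k, aux_gamma_add_nat (by linarith : (0:ℝ) < c + a) k]
    have h2n : ((2:ℝ))^n ≠ 0 := by positivity
    field_simp
  rw [step1, step2, step3, step4, step5, final]
end

section
/- Let \mu_1, \mu_2 be real numbers with -1/2 < \mu_1 < \mu_2, and let f(x) = \sum_{n=0}^{\infty} a_n x^n be a power series with complex coefficients converging for all |x| < 1. Then for every real x with |x| < 1, \sum_{n=0}^{\infty} a_n (\gamma_{\mu_1}(n)/\gamma_{\mu_2}(n)) x^n = (1/\beta(\mu_1+1/2, \mu_2-\mu_1)) \int_{-1}^{1} f(xt) |t|^{2\mu_1} (1-t)^{\mu_2-\mu_1-1} (1+t)^{\mu_2-\mu_1} \, dt, and the series on the left converges. -/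
open Finset

open MeasureTheory Set

lemma betaIntegrand_integrableOn {a b : ℝ} (ha : 0 < a) (hb : 0 < b) :
    IntegrableOn (fun u : ℝ => u ^ (a - 1) * (1 - u) ^ (b - 1)) (Ioo 0 1) := by
  have h := (Complex.betaIntegral_convergent (u := (a : ℂ)) (v := (b : ℂ))
      (by simpa using ha) (by simpa using hb)).1
  -- h : IntegrableOn complex fn on Ioc 0 1
  have h2 := (h.mono_set Set.Ioo_subset_Ioc_self).norm
  refine IntegrableOn.congr_fun h2 ?_ measurableSet_Ioo
  intro u hu
  have hu0 : (0:ℝ) < u := hu.1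
  have hu1 : (0:ℝ) < 1 - u := by linarith [hu.2]
  simp only [norm_mul]
  rw [show ((a:ℂ) - 1) = ((a - 1 : ℝ) : ℂ) by push_cast; ring,
      show ((b:ℂ) - 1) = ((b - 1 : ℝ) : ℂ) by push_cast; ring]
  rw [Complex.norm_cpow_eq_rpow_re_of_pos hu0, ]
  rw [show ((1:ℂ) - (u:ℂ)) = ((1 - u : ℝ) : ℂ) by push_cast; ring]
  rw [Complex.norm_cpow_eq_rpow_re_of_pos hu1]
  norm_num

lemma betaIntegrand_integral {a b : ℝ} (ha : 0 < a) (hb : 0 < b) :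
    ∫ u in Ioo (0:ℝ) 1, u ^ (a - 1) * (1 - u) ^ (b - 1) = realBeta a b := by
  have key := Complex.Gamma_mul_Gamma_eq_betaIntegral (s := (a:ℂ)) (t := (b:ℂ))
    (by simpa using ha) (by simpa using hb)
  have hbeta : Complex.betaIntegral a b
      = ((∫ u in Ioo (0:ℝ) 1, u ^ (a - 1) * (1 - u) ^ (b - 1) : ℝ) : ℂ) := by
    rw [Complex.betaIntegral, intervalIntegral.integral_of_le (by norm_num : (0:ℝ) ≤ 1),
        integral_Ioc_eq_integral_Ioo]
    have hOR : ∫ u in Ioo (0:ℝ) 1, ((u ^ (a - 1) * (1 - u) ^ (b - 1) : ℝ) : ℂ)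
        = ((∫ u in Ioo (0:ℝ) 1, u ^ (a - 1) * (1 - u) ^ (b - 1) : ℝ) : ℂ) := integral_ofReal
    rw [← hOR]
    refine setIntegral_congr_fun measurableSet_Ioo (fun u hu => ?_)
    have h1 : (0:ℝ) ≤ u := hu.1.le
    have h2 : (0:ℝ) ≤ 1 - u := by linarith [hu.2]
    push_cast
    rw [Complex.ofReal_cpow h1, Complex.ofReal_cpow h2]
    push_cast
    ring
  rw [hbeta, Complex.Gamma_ofReal, Complex.Gamma_ofReal,
    show ((a:ℂ) + (b:ℂ)) = ((a + b : ℝ) : ℂ) by push_cast; ring, Complex.Gamma_ofReal] at key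
  have key2 : Real.Gamma a * Real.Gamma b
      = Real.Gamma (a + b) * ∫ u in Ioo (0:ℝ) 1, u ^ (a - 1) * (1 - u) ^ (b - 1) := by
    exact_mod_cast key
  have hG : Real.Gamma (a + b) ≠ 0 := (Real.Gamma_pos_of_pos (by linarith)).ne'
  rw [realBeta]
  field_simp
  linarith [key2]

lemma Gamma_add_nat {x : ℝ} (hx : 0 < x) (k : ℕ) :
    Real.Gamma (x + k) = (∏ i ∈ Finset.range k, (x + i)) * Real.Gamma x := by
  induction k with
  | zero => simp
  | succ k ih =>
    have hxk : x + k ≠ 0 := by positivity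
    rw [show x + (k + 1 : ℕ) = (x + k) + 1 by push_cast; ring, Real.Gamma_add_one hxk, ih,
      Finset.prod_range_succ]
    ring

lemma dunkl_ratio (μ1 μ2 : ℝ) (h1 : 0 < μ1 + 1/2) (h12 : μ1 < μ2) (n : ℕ) :
    dunklGamma μ1 n / dunklGamma μ2 n
      = realBeta (μ1 + 1/2 + (n / 2 + n % 2 : ℕ)) (μ2 - μ1) / realBeta (μ1 + 1/2) (μ2 - μ1) := by
  have h2 : 0 < μ2 + 1/2 := by linarith
  simp only [dunklGamma, realBeta]
  set m := n / 2 + n % 2 with hm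
  have hP1 := Gamma_add_nat h1 m
  have hP2 := Gamma_add_nat h2 m
  have hprodpos : 0 < ∏ i ∈ Finset.range m, (μ2 + 1/2 + i) :=
    Finset.prod_pos (fun i _ => by positivity)
  have hprodpos1 : 0 < ∏ i ∈ Finset.range m, (μ1 + 1/2 + i) :=
    Finset.prod_pos (fun i _ => by positivity)
  have hg1 : 0 < Real.Gamma (μ1 + 1/2) := Real.Gamma_pos_of_pos h1
  have hg2 : 0 < Real.Gamma (μ2 + 1/2) := Real.Gamma_pos_of_pos h2
  have hgl : 0 < Real.Gamma (μ2 - μ1) := Real.Gamma_pos_of_pos (by linarith)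
  rw [show μ1 + 1/2 + (m:ℝ) + (μ2 - μ1) = μ2 + 1/2 + (m:ℝ) by ring,
    show μ1 + 1/2 + (μ2 - μ1) = μ2 + 1/2 by ring, hP1, hP2]
  have h2n : ((2:ℝ) ^ n) ≠ 0 := by positivity
  have hfac : ((Nat.factorial (n / 2) : ℝ)) ≠ 0 := by positivity
  have k1 : (∏ i ∈ Finset.range m, (μ1 + 1/2 + (i:ℝ))) ≠ 0 := hprodpos1.ne'
  have k2 : (∏ i ∈ Finset.range m, (μ2 + 1/2 + (i:ℝ))) ≠ 0 := hprodpos.ne'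
  have k3 := hg1.ne'
  have k4 := hg2.ne'
  have k5 := hgl.ne'
  rw [show (2:ℝ) ^ n * (Nat.factorial (n / 2) : ℝ) * (∏ i ∈ Finset.range m, (μ1 + 1/2 + (i:ℝ)))
        / ((2:ℝ) ^ n * (Nat.factorial (n / 2) : ℝ) * ∏ i ∈ Finset.range m, (μ2 + 1/2 + (i:ℝ)))
      = (∏ i ∈ Finset.range m, (μ1 + 1/2 + (i:ℝ))) / ∏ i ∈ Finset.range m, (μ2 + 1/2 + (i:ℝ))
    from mul_div_mul_left _ _ (by positivity), div_div_div_comm, mul_assoc,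
    mul_div_cancel_right₀ _ (by positivity : Real.Gamma (μ1 + 1/2) * Real.Gamma (μ2 - μ1) ≠ 0),
    mul_div_cancel_right₀ _ k4]

lemma key_pointwise (μ1 lam : ℝ) (hlam : 0 < lam) (n : ℕ) (t : ℝ)
    (ht0 : 0 < t) (ht1 : t < 1) :
    t ^ n * (|t| ^ (2 * μ1) * (1 - t) ^ (lam - 1) * (1 + t) ^ lam)
      + (-t) ^ n * (|(-t)| ^ (2 * μ1) * (1 - (-t)) ^ (lam - 1) * (1 + (-t)) ^ lam)
    = |2 * t| * ((t ^ 2) ^ ((μ1 + 1/2 + (n / 2 + n % 2 : ℕ)) - 1)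
        * (1 - t ^ 2) ^ (lam - 1)) := by
  have h1t : (0:ℝ) < 1 - t := by linarith
  have h1t' : (0:ℝ) < 1 + t := by linarith
  have habs : |t| = t := abs_of_pos ht0
  have habs2 : |(-t)| = t := by rw [abs_neg, habs]
  have habs3 : |2 * t| = 2 * t := abs_of_pos (by linarith)
  have e1 : (1 + t) ^ lam = (1 + t) ^ (lam - 1) * (1 + t) := by
    rw [← Real.rpow_add_one h1t'.ne' (lam - 1)]; ring_nf
  have e2 : (1 - t) ^ lam = (1 - t) ^ (lam - 1) * (1 - t) := by
    rw [← Real.rpow_add_one h1t.ne' (lam - 1)]; ring_nf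
  have e3 : (1 - t) ^ (lam - 1) * (1 + t) ^ (lam - 1) = (1 - t ^ 2) ^ (lam - 1) := by
    rw [← Real.mul_rpow h1t.le h1t'.le]; ring_nf
  have e4 : ∀ r : ℝ, (t ^ 2) ^ r = t ^ (2 * r) := fun r => by
    rw [← Real.rpow_two, ← Real.rpow_mul ht0.le]
  have e5 : ∀ k : ℕ, t ^ k = t ^ (k : ℝ) := fun k => (Real.rpow_natCast t k).symm
  have e6 : ∀ p q : ℝ, t ^ p * t ^ q = t ^ (p + q) := fun p q =>
    (Real.rpow_add ht0 p q).symm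
  rw [habs, habs2, habs3, show (1 - -t) = 1 + t by ring, show (1 + -t) = 1 - t by ring]
  obtain ⟨p, rfl | rfl⟩ := Nat.even_or_odd' n
  · have hm : (2 * p) / 2 + (2 * p) % 2 = p := by omega
    rw [hm, show (-t) ^ (2 * p) = t ^ (2 * p) from (Even.neg_pow (even_two_mul p) t),
      e1, e2, e4, e5 (2 * p)]
    push_cast
    rw [show (2:ℝ) * ((μ1 + 1/2 + p) - 1) = 2 * μ1 + 2 * (p:ℝ) - 1 by ring, ← e3]
    have c1 : t ^ (2 * (p:ℝ)) * t ^ (2 * μ1) = t ^ (2 * μ1 + 2 * (p:ℝ)) := by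
      rw [e6]; ring_nf
    have c2 : t * t ^ (2 * μ1 + 2 * (p:ℝ) - 1) = t ^ (2 * μ1 + 2 * (p:ℝ)) := by
      nth_rewrite 1 [← Real.rpow_one t]
      rw [e6]; ring_nf
    linear_combination (2 * (1 - t) ^ (lam - 1) * (1 + t) ^ (lam - 1)) * c1
      - (2 * (1 - t) ^ (lam - 1) * (1 + t) ^ (lam - 1)) * c2
  · have hm : (2 * p + 1) / 2 + (2 * p + 1) % 2 = p + 1 := by omega
    rw [hm, show (-t) ^ (2 * p + 1) = -(t ^ (2 * p + 1)) from (Odd.neg_pow ⟨p, by ring⟩ t),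
      e1, e2, e4, e5 (2 * p + 1)]
    push_cast
    rw [show (2:ℝ) * ((μ1 + 1/2 + ((p:ℝ) + 1)) - 1) = 2 * μ1 + 2 * (p:ℝ) + 1 by ring, ← e3]
    have c1 : t ^ (2 * (p:ℝ) + 1) * t ^ (2 * μ1) = t ^ (2 * μ1 + 2 * (p:ℝ) + 1) := by
      rw [e6]; ring_nf
    linear_combination (2 * t * (1 - t) ^ (lam - 1) * (1 + t) ^ (lam - 1)) * c1

lemma w_measurable (μ1 lam : ℝ) :
    Measurable (fun t : ℝ => |t| ^ (2 * μ1) * (1 - t) ^ (lam - 1) * (1 + t) ^ lam) := by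
  fun_prop

lemma neg_rpow_integrableOn (c : ℝ) (hc : 0 < 2 * c + 1) :
    IntegrableOn (fun t : ℝ => (-t) ^ (2 * c)) (Set.Ioo (-1) 0) := by
  have himg : Neg.neg '' Set.Ioo (0:ℝ) 1 = Set.Ioo (-1) 0 := by
    rw [Set.image_neg_Ioo]; norm_num
  rw [← himg, integrableOn_image_iff_integrableOn_abs_deriv_smul measurableSet_Ioo
    (fun x _ => (hasDerivAt_neg x).hasDerivWithinAt) (neg_injective.injOn)]
  simp only [abs_neg, abs_one, neg_neg, one_smul]
  have h := betaIntegrand_integrableOn (a := 2 * c + 1) (b := 1) hc one_pos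
  refine IntegrableOn.congr_fun h (fun u hu => ?_) measurableSet_Ioo
  rw [show (2 * c + 1 - 1) = 2 * c by ring, show (1:ℝ) - 1 = 0 by ring, Real.rpow_zero, mul_one]

lemma w_integrableOn (μ1 lam : ℝ) (h1 : 0 < 2 * μ1 + 1) (hlam : 0 < lam) :
    IntegrableOn (fun t : ℝ => |t| ^ (2 * μ1) * (1 - t) ^ (lam - 1) * (1 + t) ^ lam)
      (Set.Ioc (-1) 1) := by
  set w := fun t : ℝ => |t| ^ (2 * μ1) * (1 - t) ^ (lam - 1) * (1 + t) ^ lam with hw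
  have hmeas := w_measurable μ1 lam
  have hpos : IntegrableOn w (Set.Ioc 0 1) := by
    rw [integrableOn_Ioc_iff_integrableOn_Ioo]
    have hbeta := (betaIntegrand_integrableOn (a := 2 * μ1 + 1) (b := lam) h1 hlam).const_mul
      ((2:ℝ) ^ lam)
    refine Integrable.mono' hbeta (hmeas.aestronglyMeasurable.restrict) ?_
    filter_upwards [MeasureTheory.ae_restrict_mem measurableSet_Ioo] with t ht
    have ht0 : (0:ℝ) < t := ht.1
    have ht1 : t < 1 := ht.2
    have hn1 : (0:ℝ) ≤ |t| ^ (2 * μ1) := Real.rpow_nonneg (abs_nonneg t) _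
    have hn2 : (0:ℝ) ≤ (1 - t) ^ (lam - 1) := Real.rpow_nonneg (by linarith) _
    have hn3 : (0:ℝ) ≤ (1 + t) ^ lam := Real.rpow_nonneg (by linarith) _
    have : ‖w t‖ = w t := Real.norm_of_nonneg
      (by rw [hw]; exact mul_nonneg (mul_nonneg hn1 hn2) hn3)
    rw [this, hw]
    simp only []
    rw [show (2 * μ1 + 1 - 1) = 2 * μ1 by ring, abs_of_pos ht0]
    have hle : (1 + t) ^ lam ≤ (2:ℝ) ^ lam :=
      Real.rpow_le_rpow (by linarith) (by linarith) hlam.le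
    calc t ^ (2 * μ1) * (1 - t) ^ (lam - 1) * (1 + t) ^ lam
        ≤ t ^ (2 * μ1) * (1 - t) ^ (lam - 1) * (2:ℝ) ^ lam := by
          refine mul_le_mul_of_nonneg_left hle
            (mul_nonneg (Real.rpow_nonneg ht0.le _) (Real.rpow_nonneg (by linarith) _))
      _ = 2 ^ lam * (t ^ (2 * μ1) * (1 - t) ^ (lam - 1)) := by ring
  have hneg : IntegrableOn w (Set.Ioc (-1) 0) := by
    rw [integrableOn_Ioc_iff_integrableOn_Ioo]
    have hdom := (neg_rpow_integrableOn μ1 h1).const_mul (1 + (2:ℝ) ^ (lam - 1))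
    refine Integrable.mono' hdom (hmeas.aestronglyMeasurable.restrict) ?_
    filter_upwards [MeasureTheory.ae_restrict_mem measurableSet_Ioo] with t ht
    have ht0 : t < 0 := ht.2
    have ht1 : -1 < t := ht.1
    have hn1 : (0:ℝ) ≤ |t| ^ (2 * μ1) := Real.rpow_nonneg (abs_nonneg t) _
    have hn2 : (0:ℝ) ≤ (1 - t) ^ (lam - 1) := Real.rpow_nonneg (by linarith) _
    have hn3 : (0:ℝ) ≤ (1 + t) ^ lam := Real.rpow_nonneg (by linarith) _
    have hn4 : (0:ℝ) ≤ (-t) ^ (2 * μ1) := Real.rpow_nonneg (by linarith) _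
    have : ‖w t‖ = w t := Real.norm_of_nonneg
      (by rw [hw]; exact mul_nonneg (mul_nonneg hn1 hn2) hn3)
    rw [this, hw]
    simp only []
    rw [abs_of_neg ht0]
    have hb2 : (1 - t) ^ (lam - 1) ≤ 1 + (2:ℝ) ^ (lam - 1) := by
      rcases le_or_gt 1 lam with h | h
      · have : (1 - t) ^ (lam - 1) ≤ (2:ℝ) ^ (lam - 1) :=
          Real.rpow_le_rpow (by linarith) (by linarith) (by linarith)
        have h2 : (0:ℝ) ≤ (2:ℝ) ^ (lam - 1) := by positivity
        linarith
      · have : (1 - t) ^ (lam - 1) ≤ 1 :=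
          Real.rpow_le_one_of_one_le_of_nonpos (by linarith) (by linarith)
        have h2 : (0:ℝ) ≤ (2:ℝ) ^ (lam - 1) := by positivity
        linarith
    have hb3 : (1 + t) ^ lam ≤ 1 :=
      Real.rpow_le_one (by linarith) (by linarith) hlam.le
    calc (-t) ^ (2 * μ1) * (1 - t) ^ (lam - 1) * (1 + t) ^ lam
        ≤ (-t) ^ (2 * μ1) * (1 + (2:ℝ) ^ (lam - 1)) * 1 := by
          refine mul_le_mul (mul_le_mul_of_nonneg_left hb2 hn4) hb3
            (Real.rpow_nonneg (by linarith) _) (mul_nonneg hn4 (by positivity))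
      _ = (1 + (2:ℝ) ^ (lam - 1)) * (-t) ^ (2 * μ1) := by ring
  have := hneg.union hpos
  rwa [Set.Ioc_union_Ioc_eq_Ioc (by norm_num) (by norm_num)] at this

lemma sq_image_Ioo : (fun x : ℝ => x ^ 2) '' Set.Ioo 0 1 = Set.Ioo 0 1 := by
  ext u
  constructor
  · rintro ⟨x, ⟨hx1, hx2⟩, rfl⟩
    exact ⟨pow_pos hx1 2, by show x ^ 2 < 1; nlinarith⟩
  · intro hu
    refine ⟨Real.sqrt u, ⟨Real.sqrt_pos.mpr hu.1, ?_⟩, Real.sq_sqrt hu.1.le⟩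
    have := Real.sqrt_lt_sqrt hu.1.le hu.2
    simpa using this

lemma moment (μ1 lam : ℝ) (h1 : 0 < 2 * μ1 + 1) (hlam : 0 < lam) (n : ℕ) :
    ∫ t in Set.Ioc (-1:ℝ) 1,
        t ^ n * (|t| ^ (2 * μ1) * (1 - t) ^ (lam - 1) * (1 + t) ^ lam)
      = realBeta (μ1 + 1/2 + (n / 2 + n % 2 : ℕ)) lam := by
  set w := fun t : ℝ => |t| ^ (2 * μ1) * (1 - t) ^ (lam - 1) * (1 + t) ^ lam with hw
  set g := fun t : ℝ => t ^ n * w t with hg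
  have hwint := w_integrableOn μ1 lam h1 hlam
  have hgmeas : Measurable g := (measurable_id.pow_const n).mul (w_measurable μ1 lam)
  have hwnn : ∀ t ∈ Set.Ioc (-1:ℝ) 1, 0 ≤ w t := by
    intro t ht
    exact mul_nonneg (mul_nonneg (Real.rpow_nonneg (abs_nonneg t) _)
      (Real.rpow_nonneg (by linarith [ht.2]) _)) (Real.rpow_nonneg (by linarith [ht.1]) _)
  have hgint : IntegrableOn g (Set.Ioc (-1) 1) := by
    refine Integrable.mono' hwint hgmeas.aestronglyMeasurable.restrict ?_
    filter_upwards [MeasureTheory.ae_restrict_mem measurableSet_Ioc] with t ht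
    have h1t : |t| ≤ 1 := abs_le.mpr ⟨ht.1.le, ht.2⟩
    have : ‖g t‖ = |t| ^ n * |w t| := by rw [hg]; simp [abs_mul, abs_pow]
    rw [this, abs_of_nonneg (hwnn t ht)]
    calc |t| ^ n * w t ≤ 1 * w t :=
          mul_le_mul_of_nonneg_right (pow_le_one₀ (abs_nonneg t) h1t) (hwnn t ht)
      _ = w t := one_mul _
  -- split the integral
  have hsplit : ∫ t in Set.Ioc (-1:ℝ) 1, g t
      = (∫ t in Set.Ioo (-1:ℝ) 0, g t) + ∫ t in Set.Ioo (0:ℝ) 1, g t := by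
    rw [← Set.Ioc_union_Ioc_eq_Ioc (by norm_num : (-1:ℝ) ≤ 0) (by norm_num : (0:ℝ) ≤ 1),
      MeasureTheory.setIntegral_union (Set.Ioc_disjoint_Ioc_of_le le_rfl) measurableSet_Ioc
        (hgint.mono_set (by intro t ht; exact ⟨ht.1, by linarith [ht.2]⟩))
        (hgint.mono_set (by intro t ht; exact ⟨by linarith [ht.1], ht.2⟩)),
      MeasureTheory.integral_Ioc_eq_integral_Ioo, MeasureTheory.integral_Ioc_eq_integral_Ioo]
  -- reflect the negative part
  have himg : Neg.neg '' Set.Ioo (0:ℝ) 1 = Set.Ioo (-1) 0 := by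
    rw [Set.image_neg_Ioo]; norm_num
  have hrefl : ∫ t in Set.Ioo (-1:ℝ) 0, g t = ∫ t in Set.Ioo (0:ℝ) 1, g (-t) := by
    rw [← himg, MeasureTheory.integral_image_eq_integral_abs_deriv_smul measurableSet_Ioo
      (fun x _ => (hasDerivAt_neg x).hasDerivWithinAt) (neg_injective.injOn) g]
    simp
  have hreflint : IntegrableOn (fun t => g (-t)) (Set.Ioo (0:ℝ) 1) := by
    have h0 : IntegrableOn g (Set.Ioo (-1:ℝ) 0) :=
      hgint.mono_set (by intro t ht; exact ⟨ht.1, by linarith [ht.2]⟩)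
    rw [← himg, integrableOn_image_iff_integrableOn_abs_deriv_smul measurableSet_Ioo
      (fun x _ => (hasDerivAt_neg x).hasDerivWithinAt) (neg_injective.injOn)] at h0
    simpa using h0
  have hposint : IntegrableOn g (Set.Ioo (0:ℝ) 1) :=
    (hgint.mono_set (by intro t ht; exact ⟨by linarith [ht.1], ht.2⟩)).mono_set
      Set.Ioo_subset_Ioc_self
  have hcomb : (∫ t in Set.Ioo (0:ℝ) 1, g (-t)) + (∫ t in Set.Ioo (0:ℝ) 1, g t)
      = ∫ t in Set.Ioo (0:ℝ) 1, (g t + g (-t)) := by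
    rw [← MeasureTheory.integral_add hreflint hposint]
    congr 1
    ext t
    ring
  -- pointwise identity
  have hpoint : ∫ t in Set.Ioo (0:ℝ) 1, (g t + g (-t))
      = ∫ t in Set.Ioo (0:ℝ) 1,
          |2 * t| • ((fun u : ℝ => u ^ ((μ1 + 1/2 + (n / 2 + n % 2 : ℕ)) - 1)
            * (1 - u) ^ (lam - 1)) (t ^ 2)) := by
    refine MeasureTheory.setIntegral_congr_fun measurableSet_Ioo (fun t ht => ?_)
    have := key_pointwise μ1 lam hlam n t ht.1 ht.2
    simpa [hg, hw, smul_eq_mul] using this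
  -- substitution u = t^2
  have hsub : ∫ u in Set.Ioo (0:ℝ) 1,
        u ^ ((μ1 + 1/2 + (n / 2 + n % 2 : ℕ)) - 1) * (1 - u) ^ (lam - 1)
      = ∫ t in Set.Ioo (0:ℝ) 1,
          |2 * t| • ((fun u : ℝ => u ^ ((μ1 + 1/2 + (n / 2 + n % 2 : ℕ)) - 1)
            * (1 - u) ^ (lam - 1)) (t ^ 2)) := by
    nth_rewrite 1 [← sq_image_Ioo]
    rw [MeasureTheory.integral_image_eq_integral_abs_deriv_smul (f' := fun x => 2 * x)
      measurableSet_Ioo (fun x _ => by simpa using (hasDerivAt_pow 2 x).hasDerivWithinAt)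
      (fun s hs t ht hst => by nlinarith [hs.1, ht.1, hs.2, ht.2])]
  have hapos : (0:ℝ) < μ1 + 1/2 + ((n / 2 + n % 2 : ℕ) : ℝ) := by
    have : (0:ℝ) ≤ ((n / 2 + n % 2 : ℕ) : ℝ) := Nat.cast_nonneg _
    linarith
  rw [hsplit, hrefl, hcomb, hpoint, ← hsub, betaIntegrand_integral hapos hlam]


/-- integral representation of the Dunkl transfer operator
`θ(xⁿ) = (γ_{μ₁}(n)/γ_{μ₂}(n)) xⁿ` applied to an analytic function on the
unit disc. -/
theorem dunkl_transfer_integral_rep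
    (μ1 μ2 : ℝ) (h1 : -(1/2) < μ1) (h2 : μ1 < μ2)
    (a : ℕ → ℂ) (hconv : ∀ z : ℂ, ‖z‖ < 1 → Summable (fun n => a n * z ^ n))
    (x : ℝ) (hx : |x| < 1) :
    HasSum (fun n => a n * ((dunklGamma μ1 n / dunklGamma μ2 n : ℝ) : ℂ) * (x : ℂ) ^ n)
      (((realBeta (μ1 + 1/2) (μ2 - μ1) : ℝ) : ℂ)⁻¹ *
        ∫ t in (-1:ℝ)..1,
          (∑' n, a n * ((x * t : ℝ) : ℂ) ^ n) *
            ((|t| ^ (2 * μ1) * (1 - t) ^ (μ2 - μ1 - 1) * (1 + t) ^ (μ2 - μ1) : ℝ) : ℂ)) := by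
  have hμ : 0 < 2 * μ1 + 1 := by linarith
  have hlam : 0 < μ2 - μ1 := by linarith
  set lam := μ2 - μ1 with hlamdef
  set w := fun t : ℝ => |t| ^ (2 * μ1) * (1 - t) ^ (lam - 1) * (1 + t) ^ lam with hw
  -- summability of ∑ ‖a n‖ |x|^n
  have hA : Summable (fun n => ‖a n‖ * |x| ^ n) := by
    set r : ℝ := (|x| + 1) / 2 with hr
    have hr0 : 0 < r := by positivity
    have hxr : |x| < r := by rw [hr]; linarith
    have hr1 : r < 1 := by rw [hr]; linarith
    have hs := hconv ((r : ℝ) : ℂ) (by rwa [Complex.norm_real, Real.norm_of_nonneg hr0.le])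
    have htend := hs.tendsto_atTop_zero.norm
    have hbdd : BddAbove (Set.range fun n => ‖a n * ((r:ℝ):ℂ) ^ n‖) := by
      refine htend.bddAbove_range
    obtain ⟨C, hC⟩ := hbdd
    have hCnn : ∀ n, ‖a n‖ * r ^ n ≤ C := by
      intro n
      have := hC (Set.mem_range_self (f := fun n => ‖a n * ((r:ℝ):ℂ) ^ n‖) n)
      simpa [norm_mul, norm_pow, Complex.norm_real, Real.norm_of_nonneg hr0.le,
        abs_of_pos hr0] using this
    refine Summable.of_nonneg_of_le (fun n => by positivity)
      (fun n => ?_) ((summable_geometric_of_lt_one (by positivity)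
        (by rw [div_lt_one hr0]; exact hxr) : Summable fun n => (|x| / r) ^ n).mul_left C)
    have hrn : (0:ℝ) < r ^ n := by positivity
    have : ‖a n‖ * |x| ^ n = (‖a n‖ * r ^ n) * (|x| / r) ^ n := by
      field_simp
      rw [mul_assoc, ← mul_pow, mul_div_assoc', mul_div_cancel_left₀ _ hr0.ne']
    rw [this]
    exact mul_le_mul_of_nonneg_right (hCnn n) (by positivity)
  -- the summands
  set F : ℕ → ℝ → ℂ := fun n t => a n * ((x * t : ℝ) : ℂ) ^ n * ((w t : ℝ) : ℂ) with hF
  have hwmeas := w_measurable μ1 lam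
  have hwint := w_integrableOn μ1 lam hμ hlam
  have hwnn : ∀ t ∈ Set.Ioc (-1:ℝ) 1, 0 ≤ w t := by
    intro t ht
    exact mul_nonneg (mul_nonneg (Real.rpow_nonneg (abs_nonneg t) _)
      (Real.rpow_nonneg (by linarith [ht.2]) _)) (Real.rpow_nonneg (by linarith [ht.1]) _)
  have hFmeas : ∀ n, Measurable (F n) := by
    intro n
    exact (measurable_const.mul ((Complex.measurable_ofReal.comp
      (measurable_const.mul measurable_id)).pow_const n)).mul
      (Complex.measurable_ofReal.comp hwmeas)
  have hFbound : ∀ n, ∀ t ∈ Set.Ioc (-1:ℝ) 1, ‖F n t‖ ≤ (‖a n‖ * |x| ^ n) * w t := by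
    intro n t ht
    have h1t : |t| ≤ 1 := abs_le.mpr ⟨ht.1.le, ht.2⟩
    rw [hF]
    simp only [norm_mul, norm_pow, Complex.norm_real]
    rw [Real.norm_of_nonneg (hwnn t ht)]
    simp only [Real.norm_eq_abs, abs_mul]
    have hb : (|x| * |t|) ^ n ≤ |x| ^ n := by
      rw [mul_pow]
      calc |x| ^ n * |t| ^ n ≤ |x| ^ n * 1 :=
          mul_le_mul_of_nonneg_left (pow_le_one₀ (abs_nonneg t) h1t) (by positivity)
        _ = |x| ^ n := mul_one _
    calc ‖a n‖ * (|x| * |t|) ^ n * w t ≤ ‖a n‖ * |x| ^ n * w t := by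
          refine mul_le_mul_of_nonneg_right (mul_le_mul_of_nonneg_left hb (norm_nonneg _))
            (hwnn t ht)
      _ = (‖a n‖ * |x| ^ n) * w t := by ring
  have hFint : ∀ n, Integrable (F n) (MeasureTheory.volume.restrict (Set.Ioc (-1:ℝ) 1)) := by
    intro n
    refine MeasureTheory.Integrable.mono' (hwint.const_mul (‖a n‖ * |x| ^ n))
      (hFmeas n).aestronglyMeasurable.restrict ?_
    filter_upwards [MeasureTheory.ae_restrict_mem measurableSet_Ioc] with t ht
    exact hFbound n t ht
  have hFnormint : ∀ n, (∫ t in Set.Ioc (-1:ℝ) 1, ‖F n t‖)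
      ≤ (‖a n‖ * |x| ^ n) * ∫ t in Set.Ioc (-1:ℝ) 1, w t := by
    intro n
    rw [← MeasureTheory.integral_const_mul]
    refine MeasureTheory.integral_mono_of_nonneg
      (Filter.Eventually.of_forall (fun t => norm_nonneg _))
      (hwint.const_mul _) ?_
    filter_upwards [MeasureTheory.ae_restrict_mem measurableSet_Ioc] with t ht
    exact hFbound n t ht
  have hFsum : Summable (fun n => ∫ t in Set.Ioc (-1:ℝ) 1, ‖F n t‖) := by
    refine Summable.of_nonneg_of_le
      (fun n => MeasureTheory.integral_nonneg (fun t => norm_nonneg _))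
      hFnormint (hA.mul_right _)
  have HS := MeasureTheory.hasSum_integral_of_summable_integral_norm hFint hFsum
  -- identify ∫ F n
  have hB0 : (0:ℝ) < realBeta (μ1 + 1/2) lam := by
    rw [realBeta]
    have g1 := Real.Gamma_pos_of_pos (show (0:ℝ) < μ1 + 1/2 by linarith)
    have g2 := Real.Gamma_pos_of_pos hlam
    have g3 := Real.Gamma_pos_of_pos (show (0:ℝ) < μ1 + 1/2 + lam by linarith)
    positivity
  have hFn : ∀ n, (∫ t in Set.Ioc (-1:ℝ) 1, F n t)
      = (a n * ((dunklGamma μ1 n / dunklGamma μ2 n : ℝ) : ℂ) * (x : ℂ) ^ n)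
        * ((realBeta (μ1 + 1/2) lam : ℝ) : ℂ) := by
    intro n
    have step1 : (∫ t in Set.Ioc (-1:ℝ) 1, F n t)
        = (a n * (x:ℂ) ^ n) * ∫ t in Set.Ioc (-1:ℝ) 1, ((t ^ n * w t : ℝ) : ℂ) := by
      rw [← MeasureTheory.integral_const_mul]
      refine MeasureTheory.setIntegral_congr_fun measurableSet_Ioc (fun t _ => ?_)
      rw [hF]
      push_cast
      ring
    have step2 : (∫ t in Set.Ioc (-1:ℝ) 1, ((t ^ n * w t : ℝ) : ℂ))
        = ((∫ t in Set.Ioc (-1:ℝ) 1, t ^ n * w t : ℝ) : ℂ) := integral_ofReal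
    rw [step1, step2, hw, moment μ1 lam hμ hlam n]
    have hr := dunkl_ratio μ1 μ2 (by linarith) h2 n
    rw [← hlamdef] at hr
    have : realBeta (μ1 + 1/2 + ((n / 2 + n % 2 : ℕ) : ℝ)) lam
        = (dunklGamma μ1 n / dunklGamma μ2 n) * realBeta (μ1 + 1/2) lam := by
      rw [hr]
      exact (div_mul_cancel₀ _ hB0.ne').symm
    rw [this]
    push_cast
    ring
  rw [funext hFn] at HS
  have HS2 := HS.mul_right (((realBeta (μ1 + 1/2) lam : ℝ) : ℂ))⁻¹
  have hB0c : ((realBeta (μ1 + 1/2) lam : ℝ) : ℂ) ≠ 0 := by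
    simpa using hB0.ne'
  rw [intervalIntegral.integral_of_le (by norm_num : (-1:ℝ) ≤ 1)]
  have htsum : (∫ t in Set.Ioc (-1:ℝ) 1, ∑' n, F n t)
      = ∫ t in Set.Ioc (-1:ℝ) 1,
          (∑' n, a n * ((x * t : ℝ) : ℂ) ^ n) * ((w t : ℝ) : ℂ) := by
    refine MeasureTheory.setIntegral_congr_fun measurableSet_Ioc (fun t _ => ?_)
    rw [hF]
    exact tsum_mul_right
  rw [htsum] at HS2
  simp only [mul_inv_cancel_right₀ hB0c] at HS2
  rw [mul_comm (((realBeta (μ1 + 1/2) lam : ℝ) : ℂ))⁻¹]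
  exact HS2
end

section
/- Let (a_k^{(1)}), (b_k^{(1)}), (a_k^{(2)}), (b_k^{(2)}) be complex sequences with a_0^{(1)} \ne 0, a_0^{(2)} \ne 0 and b_k^{(1)} \ne 0, b_k^{(2)} \ne 0 for all k, and let P_n and Q_n be the associated Brenke polynomials. Suppose C : \mathbb{N} \times \mathbb{N} \to \mathbb{C} satisfies Q_n(x) = \sum_{m=0}^{n} C(m,n) P_m(x) for all n. Let A_1 = \sum_{k\ge0} a_k^{(1)} t^k and A_2 = \sum_{k\ge0} a_k^{(2)} t^k as formal power series over \mathbb{C}, and let \Theta be the linear map on formal power series rescaling the n-th coefficient by b_n^{(2)}/b_n^{(1)}. Then for every m \in \mathbb{N} and every n \ge m, the coefficient of t^n in the formal power series A_2 \cdot \Theta(t^m \cdot A_1^{-1}) equals (m!/n!) C(m,n), and for n < m this coefficient is 0. -/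
open Finset

/-- The Brenke polynomial `P_n(x) = n! ∑_{m=0}^{n} b_m a_{n-m} x^m` associated
with coefficient sequences `a`, `b`. -/
noncomputable def brenke (a b : ℕ → ℂ) (n : ℕ) (x : ℂ) : ℂ :=
  (Nat.factorial n : ℂ) * ∑ m ∈ Finset.range (n + 1), b m * a (n - m) * x ^ m

lemma coeff_ext {N : ℕ} {c d : ℕ → ℂ}
    (h : ∀ x : ℂ, ∑ j ∈ range N, c j * x ^ j = ∑ j ∈ range N, d j * x ^ j) :
    ∀ j ∈ range N, c j = d j := by
  intro j hj
  have hpq : (∑ j ∈ range N, Polynomial.C (c j) * Polynomial.X ^ j)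
      = ∑ j ∈ range N, Polynomial.C (d j) * Polynomial.X ^ j := by
    apply Polynomial.funext
    intro x
    simp only [Polynomial.eval_finset_sum, Polynomial.eval_mul, Polynomial.eval_C,
      Polynomial.eval_pow, Polynomial.eval_X]
    exact h x
  have h2 := congrArg (fun p => Polynomial.coeff p j) hpq
  simp only [Polynomial.finset_sum_coeff, Polynomial.coeff_C_mul,
    Polynomial.coeff_X_pow, mul_ite, mul_one, mul_zero] at h2
  rwa [Finset.sum_ite_eq (range N) j c, Finset.sum_ite_eq (range N) j d,
    if_pos hj, if_pos hj] at h2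

lemma brenke_key (a1 b1 a2 b2 : ℕ → ℂ) (C : ℕ → ℕ → ℂ)
    (hC : ∀ (n : ℕ) (x : ℂ),
      brenke a2 b2 n x = ∑ m ∈ Finset.range (n + 1), C m n * brenke a1 b1 m x)
    (n : ℕ) :
    ∀ j ∈ range (n + 1),
      (Nat.factorial n : ℂ) * (b2 j * a2 (n - j)) =
        ∑ m ∈ range (n + 1),
          (if j ≤ m then C m n * (Nat.factorial m : ℂ) * (b1 j * a1 (m - j)) else 0) := by
  apply coeff_ext
  intro x
  have L : ∑ j ∈ range (n + 1), (Nat.factorial n : ℂ) * (b2 j * a2 (n - j)) * x ^ j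
      = brenke a2 b2 n x := by
    rw [brenke, Finset.mul_sum]
    exact Finset.sum_congr rfl fun j _ => by ring
  rw [L, hC n x]
  have R : ∀ j, (∑ m ∈ range (n + 1),
          (if j ≤ m then C m n * (Nat.factorial m : ℂ) * (b1 j * a1 (m - j)) else 0)) * x ^ j
      = ∑ m ∈ range (n + 1),
          (if j ≤ m then C m n * (Nat.factorial m : ℂ) * (b1 j * a1 (m - j)) * x ^ j else 0) := by
    intro j
    rw [Finset.sum_mul]
    exact Finset.sum_congr rfl fun m _ => by split <;> simp
  simp only [R]
  rw [Finset.sum_comm]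
  apply Finset.sum_congr rfl
  intro m hm
  have hmn : m + 1 ≤ n + 1 := by
    simp only [mem_range] at hm; omega
  have hsub : ∑ j ∈ range (m + 1),
        (if j ≤ m then C m n * (Nat.factorial m : ℂ) * (b1 j * a1 (m - j)) * x ^ j else 0)
      = ∑ j ∈ range (n + 1),
        (if j ≤ m then C m n * (Nat.factorial m : ℂ) * (b1 j * a1 (m - j)) * x ^ j else 0) := by
    apply Finset.sum_subset (Finset.range_subset_range.mpr hmn)
    intro j _ hj
    rw [if_neg]
    simp only [mem_range] at hj; omega
  rw [← hsub, brenke, Finset.mul_sum, Finset.mul_sum]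
  apply Finset.sum_congr rfl
  intro j hj
  simp only [mem_range] at hj
  rw [if_pos (by omega)]
  ring

/-- generating function for the connection coefficients between
two Brenke polynomial sets.  If `Q_n = ∑_{m≤n} C(m,n) P_m` then the coefficient
of `tⁿ` in `A₂(t)·Θ(tᵐ/A₁(t))` equals `(m!/n!) C(m,n)` for `n ≥ m`, and
vanishes for `n < m`, where `Θ` rescales the `n`-th coefficient of a formal
power series by `b₂ₙ/b₁ₙ`. -/
theorem brenke_connection_generating_function
    (a1 b1 a2 b2 : ℕ → ℂ)
    (ha1 : a1 0 ≠ 0) (ha2 : a2 0 ≠ 0)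
    (hb1 : ∀ k, b1 k ≠ 0) (hb2 : ∀ k, b2 k ≠ 0)
    (C : ℕ → ℕ → ℂ)
    (hC : ∀ (n : ℕ) (x : ℂ),
      brenke a2 b2 n x = ∑ m ∈ Finset.range (n + 1), C m n * brenke a1 b1 m x)
    (Θ : PowerSeries ℂ →ₗ[ℂ] PowerSeries ℂ)
    (hΘ : ∀ (f : PowerSeries ℂ) (n : ℕ),
      PowerSeries.coeff n (Θ f) = (b2 n / b1 n) * PowerSeries.coeff n f)
    (m n : ℕ) :
    (m ≤ n →
      PowerSeries.coeff n
          (PowerSeries.mk a2 * Θ (PowerSeries.X ^ m * (PowerSeries.mk a1)⁻¹)) =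
        (Nat.factorial m : ℂ) / (Nat.factorial n : ℂ) * C m n) ∧
    (n < m →
      PowerSeries.coeff n
          (PowerSeries.mk a2 * Θ (PowerSeries.X ^ m * (PowerSeries.mk a1)⁻¹)) = 0) := by
  set d : ℕ → ℂ := fun k => PowerSeries.coeff k (PowerSeries.mk a1)⁻¹ with hd_def
  have hconst : PowerSeries.constantCoeff (PowerSeries.mk a1) ≠ 0 := by
    simpa using ha1
  -- the convolution identity for coefficients of the inverse
  have hd : ∀ k : ℕ, (∑ i ∈ range (k + 1), d i * a1 (k - i)) = if k = 0 then 1 else 0 := by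
    intro k
    have hone : (PowerSeries.mk a1)⁻¹ * PowerSeries.mk a1 = 1 :=
      PowerSeries.inv_mul_cancel _ hconst
    have h := congrArg (fun f => PowerSeries.coeff k f) hone
    simp only [PowerSeries.coeff_mul, PowerSeries.coeff_one] at h
    rw [Finset.Nat.sum_antidiagonal_eq_sum_range_succ_mk] at h
    simpa [hd_def] using h
  -- coefficient of Θ (X^m * A1⁻¹)
  have hg : ∀ q : ℕ, PowerSeries.coeff q
      (Θ (PowerSeries.X ^ m * (PowerSeries.mk a1)⁻¹)) =
      (b2 q / b1 q) * (if m ≤ q then d (q - m) else 0) := by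
    intro q
    rw [hΘ, PowerSeries.coeff_X_pow_mul']
  -- main coefficient expansion
  have hmain : PowerSeries.coeff n
      (PowerSeries.mk a2 * Θ (PowerSeries.X ^ m * (PowerSeries.mk a1)⁻¹)) =
      ∑ j ∈ range (n + 1),
        a2 (n - j) * ((b2 j / b1 j) * (if m ≤ j then d (j - m) else 0)) := by
    rw [PowerSeries.coeff_mul, Finset.Nat.sum_antidiagonal_eq_sum_range_succ_mk]
    rw [← Finset.sum_range_reflect]
    apply Finset.sum_congr rfl
    intro j hj
    simp only [mem_range] at hj
    have e1 : n + 1 - 1 - j = n - j := by omega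
    have e2 : n - (n - j) = j := by omega
    rw [e1, e2, PowerSeries.coeff_mk, hg]
  constructor
  · -- case m ≤ n
    intro hmn
    rw [hmain]
    have key := brenke_key a1 b1 a2 b2 C hC n
    -- the inner orthogonality sum
    have hS : ∀ m' ∈ range (n + 1),
        (∑ j ∈ range (n + 1),
          (if m ≤ j ∧ j ≤ m' then d (j - m) * a1 (m' - j) else 0)) =
        if m' = m then 1 else 0 := by
      intro m' hm'
      simp only [mem_range] at hm'
      rcases lt_or_ge m' m with h | h
      · rw [if_neg (by omega)]
        apply Finset.sum_eq_zero
        intro j _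
        rw [if_neg (by omega)]
      · have hfil : ∑ j ∈ range (n + 1),
            (if m ≤ j ∧ j ≤ m' then d (j - m) * a1 (m' - j) else 0)
            = ∑ j ∈ Finset.Ico m (m' + 1), d (j - m) * a1 (m' - j) := by
          rw [← Finset.sum_filter]
          congr 1
          ext j
          simp only [Finset.mem_filter, mem_range, Finset.mem_Ico]
          omega
        rw [hfil, Finset.sum_Ico_eq_sum_range]
        have e3 : m' + 1 - m = m' - m + 1 := by omega
        rw [e3]
        have := hd (m' - m)
        calc ∑ i ∈ range (m' - m + 1), d (m + i - m) * a1 (m' - (m + i))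
            = ∑ i ∈ range (m' - m + 1), d i * a1 (m' - m - i) := by
              apply Finset.sum_congr rfl
              intro i hi
              simp only [mem_range] at hi
              congr 2 <;> omega
          _ = if m' - m = 0 then 1 else 0 := hd (m' - m)
          _ = if m' = m then 1 else 0 := by
              congr 1
              simp only [eq_iff_iff]
              omega
    have hfac : (Nat.factorial n : ℂ) ≠ 0 := Nat.cast_ne_zero.mpr (Nat.factorial_ne_zero n)
    apply mul_left_cancel₀ hfac
    have hTn : (Nat.factorial n : ℂ) * (∑ j ∈ range (n + 1),
        a2 (n - j) * ((b2 j / b1 j) * (if m ≤ j then d (j - m) else 0)))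
        = C m n * (Nat.factorial m : ℂ) := by
      rw [Finset.mul_sum]
      have step1 : ∀ j ∈ range (n + 1),
          (Nat.factorial n : ℂ) * (a2 (n - j) * ((b2 j / b1 j) * (if m ≤ j then d (j - m) else 0)))
          = ∑ m' ∈ range (n + 1),
              (if m ≤ j ∧ j ≤ m'
                then C m' n * (Nat.factorial m' : ℂ) * (d (j - m) * a1 (m' - j)) else 0) := by
        intro j hj
        by_cases hmj : m ≤ j
        · rw [if_pos hmj]
          have hb : (b1 j : ℂ) ≠ 0 := hb1 j
          have lhs_eq : (Nat.factorial n : ℂ) *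
              (a2 (n - j) * ((b2 j / b1 j) * d (j - m)))
              = d (j - m) * (b1 j)⁻¹ * ((Nat.factorial n : ℂ) * (b2 j * a2 (n - j))) := by
            field_simp
          rw [lhs_eq, key j hj, Finset.mul_sum]
          apply Finset.sum_congr rfl
          intro m' _
          by_cases hjm' : j ≤ m'
          · rw [if_pos hjm', if_pos ⟨hmj, hjm'⟩]
            field_simp
          · rw [if_neg hjm', if_neg (by tauto), mul_zero]
        · rw [if_neg hmj]
          simp only [mul_zero, zero_mul]
          symm
          apply Finset.sum_eq_zero
          intro m' _
          rw [if_neg (by tauto)]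
      rw [Finset.sum_congr rfl step1, Finset.sum_comm]
      have step2 : ∀ m' ∈ range (n + 1),
          (∑ j ∈ range (n + 1),
            (if m ≤ j ∧ j ≤ m'
              then C m' n * (Nat.factorial m' : ℂ) * (d (j - m) * a1 (m' - j)) else 0))
          = (if m' = m then C m' n * (Nat.factorial m' : ℂ) else 0) := by
        intro m' hm'
        have : ∑ j ∈ range (n + 1),
            (if m ≤ j ∧ j ≤ m'
              then C m' n * (Nat.factorial m' : ℂ) * (d (j - m) * a1 (m' - j)) else 0)
            = C m' n * (Nat.factorial m' : ℂ) * ∑ j ∈ range (n + 1),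
              (if m ≤ j ∧ j ≤ m' then d (j - m) * a1 (m' - j) else 0) := by
          rw [Finset.mul_sum]
          apply Finset.sum_congr rfl
          intro j _
          split <;> simp
        rw [this, hS m' hm']
        split <;> simp
      rw [Finset.sum_congr rfl step2, Finset.sum_ite_eq' (range (n + 1)) m
        (fun m' => C m' n * (Nat.factorial m' : ℂ)), if_pos (by simp [mem_range]; omega)]
    rw [hTn]
    field_simp
  · -- case n < m
    intro hnm
    rw [hmain]
    apply Finset.sum_eq_zero
    intro j hj
    simp only [mem_range] at hj
    rw [if_neg (by omega), mul_zero, mul_zero]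
end

section
/- Let (a_k^{(1)}), (b_k^{(1)}), (a_k^{(2)}), (b_k^{(2)}) be complex sequences with a_0^{(1)} \ne 0, a_0^{(2)} \ne 0 and b_k^{(1)} \ne 0, b_k^{(2)} \ne 0 for all k, let P_n and Q_n be the associated Brenke polynomials, and let (\hat{a}_k^{(1)}) be the coefficients of the reciprocal power series of A_1(t) = \sum a_k^{(1)} t^k. Then for all n and all x, Q_n(x) = \sum_{m=0}^{n} C_m(n) P_m(x), where C_m(n) = (n!/m!) \sum_{k=0}^{n-m} (b_{n-k}^{(2)}/b_{n-k}^{(1)}) a_k^{(2)} \hat{a}_{n-m-k}^{(1)}. -/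
open Finset

private lemma tri {M : Type*} [AddCommMonoid M] (n : ℕ) (f : ℕ → ℕ → M) :
    ∑ m ∈ Finset.range (n + 1), ∑ j ∈ Finset.range (m + 1), f m j
      = ∑ j ∈ Finset.range (n + 1), ∑ m ∈ Finset.Ico j (n + 1), f m j := by
  apply Finset.sum_comm'
  intro m j
  simp only [Finset.mem_range, Finset.mem_Ico]
  omega

private lemma tri2 {M : Type*} [AddCommMonoid M] (N : ℕ) (g : ℕ → ℕ → M) :
    ∑ s ∈ Finset.range (N + 1), ∑ k ∈ Finset.range (N - s + 1), g s k
      = ∑ k ∈ Finset.range (N + 1), ∑ s ∈ Finset.range (N - k + 1), g s k := by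
  apply Finset.sum_comm'
  intro s k
  simp only [Finset.mem_range]
  omega

/-- explicit expression of the connection coefficients between two
Brenke polynomial sets:
`Q_n = ∑_{m≤n} C_m(n) P_m` with
`C_m(n) = (n!/m!) ∑_{k=0}^{n-m} (b₂_{n-k}/b₁_{n-k}) a₂ₖ â₁_{n-m-k}`,
where `(âₖ)` are the coefficients of the reciprocal of `A₁`. -/
theorem brenke_connection_explicit
    (a1 b1 a2 b2 : ℕ → ℂ)
    (ha1 : a1 0 ≠ 0) (ha2 : a2 0 ≠ 0)
    (hb1 : ∀ k, b1 k ≠ 0) (hb2 : ∀ k, b2 k ≠ 0)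
    (ahat : ℕ → ℂ) (hhat0 : ahat 0 = 1 / a1 0)
    (hhat : ∀ n : ℕ, 1 ≤ n → ∑ k ∈ Finset.range (n + 1), a1 k * ahat (n - k) = 0)
    (n : ℕ) (x : ℂ) :
    brenke a2 b2 n x =
      ∑ m ∈ Finset.range (n + 1),
        ((Nat.factorial n : ℂ) / (Nat.factorial m : ℂ) *
            ∑ k ∈ Finset.range (n - m + 1),
              (b2 (n - k) / b1 (n - k)) * a2 k * ahat (n - m - k)) *
          brenke a1 b1 m x := by
  have key : ∀ N : ℕ, ∑ s ∈ Finset.range (N + 1), a1 s * ahat (N - s)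
      = if N = 0 then 1 else 0 := by
    intro N
    rcases Nat.eq_zero_or_pos N with h | h
    · subst h
      rw [if_pos rfl]
      simp only [Nat.zero_add, Finset.range_one, Finset.sum_singleton, Nat.sub_zero, hhat0,
        mul_one_div]
      exact div_self ha1
    · rw [hhat N h, if_neg (by omega)]
  set S : ℕ → ℂ := fun m => ∑ k ∈ Finset.range (n - m + 1),
      (b2 (n - k) / b1 (n - k)) * a2 k * ahat (n - m - k) with hS
  set T : ℕ → ℂ := fun m => ∑ j ∈ Finset.range (m + 1), b1 j * a1 (m - j) * x ^ j with hT
  have hfac : ∀ m : ℕ, (Nat.factorial m : ℂ) ≠ 0 :=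
    fun m => Nat.cast_ne_zero.mpr (Nat.factorial_ne_zero m)
  simp only [brenke]
  have rhs_eq : ∑ m ∈ Finset.range (n + 1),
      ((Nat.factorial n : ℂ) / (Nat.factorial m : ℂ) * S m) *
        ((Nat.factorial m : ℂ) * T m)
      = (Nat.factorial n : ℂ) * ∑ m ∈ Finset.range (n + 1), S m * T m := by
    rw [Finset.mul_sum]
    apply Finset.sum_congr rfl
    intro m _
    rw [div_mul_eq_mul_div, div_mul_eq_mul_div, div_eq_iff (hfac m)]
    ring
  rw [rhs_eq]
  congr 1
  symm
  have c : ℕ → ℂ := fun k => (b2 (n - k) / b1 (n - k)) * a2 k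
  calc ∑ m ∈ Finset.range (n + 1), S m * T m
      = ∑ m ∈ Finset.range (n + 1), ∑ j ∈ Finset.range (m + 1),
          (b1 j * a1 (m - j) * x ^ j) * S m := by
        apply Finset.sum_congr rfl
        intro m _
        rw [mul_comm, hT, Finset.sum_mul]
    _ = ∑ j ∈ Finset.range (n + 1), ∑ m ∈ Finset.Ico j (n + 1),
          (b1 j * a1 (m - j) * x ^ j) * S m := tri n _
    _ = ∑ j ∈ Finset.range (n + 1), ∑ s ∈ Finset.range (n + 1 - j),
          (b1 j * a1 s * x ^ j) * S (j + s) := by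
        apply Finset.sum_congr rfl
        intro j _
        rw [Finset.sum_Ico_eq_sum_range]
        apply Finset.sum_congr rfl
        intro s _
        rw [Nat.add_sub_cancel_left]
    _ = ∑ j ∈ Finset.range (n + 1), b2 j * a2 (n - j) * x ^ j := by
        apply Finset.sum_congr rfl
        intro j hj
        have hjn : j ≤ n := Nat.lt_succ_iff.mp (Finset.mem_range.mp hj)
        have hrange : n + 1 - j = (n - j) + 1 := by omega
        rw [hrange]
        have expand : ∀ s : ℕ, (b1 j * a1 s * x ^ j) * S (j + s)
            = ∑ k ∈ Finset.range (n - j - s + 1),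
                (b1 j * a1 s * x ^ j) *
                  ((b2 (n - k) / b1 (n - k)) * a2 k * ahat (n - j - s - k)) := by
          intro s
          rw [hS, Finset.mul_sum]
          simp only [← Nat.sub_sub]
        simp only [expand]
        rw [tri2 (n - j)]
        have inner : ∀ k ∈ Finset.range (n - j + 1),
            ∑ s ∈ Finset.range (n - j - k + 1),
              (b1 j * a1 s * x ^ j) *
                ((b2 (n - k) / b1 (n - k)) * a2 k * ahat (n - j - s - k))
            = if k = n - j then
                b1 j * x ^ j * ((b2 (n - k) / b1 (n - k)) * a2 k) else 0 := by
          intro k hk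
          have hkN : k ≤ n - j := Nat.lt_succ_iff.mp (Finset.mem_range.mp hk)
          have step : ∑ s ∈ Finset.range (n - j - k + 1),
              (b1 j * a1 s * x ^ j) *
                ((b2 (n - k) / b1 (n - k)) * a2 k * ahat (n - j - s - k))
              = (b1 j * x ^ j * ((b2 (n - k) / b1 (n - k)) * a2 k)) *
                  ∑ s ∈ Finset.range ((n - j - k) + 1), a1 s * ahat ((n - j - k) - s) := by
            rw [Finset.mul_sum]
            apply Finset.sum_congr rfl
            intro s _
            rw [Nat.sub_right_comm]
            ring
          rw [step, key]
          by_cases hkn : k = n - j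
          · subst hkn
            simp
          · rw [if_neg (by omega), if_neg hkn, mul_zero]
        rw [Finset.sum_congr rfl inner, Finset.sum_ite_eq' (Finset.range (n - j + 1)) (n - j)]
        rw [if_pos (Finset.self_mem_range_succ (n - j))]
        have : n - (n - j) = j := by omega
        rw [this]
        field_simp [hb1 j]
end

section
/- Let (a_k)_{k\ge0} and (b_k)_{k\ge0} be complex sequences with a_0 \ne 0 and b_k \ne 0 for all k, let P_n be the associated Brenke polynomials, and let a \in \mathbb{C} with a \ne 0. Let (\beta_k) be the coefficients of the quotient power series A(t)/A(at), i.e. \sum_{j=0}^{k} a_j a^j \beta_{k-j} = a_k for all k. Then the duplication formula holds: for all n and all x, P_n(ax) = \sum_{m=0}^{n} (n!/m!) a^m \beta_{n-m} P_m(x). -/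
open Finset

/-- duplication formula for Brenke polynomials:
`P_n(ax) = ∑_{m=0}^{n} (n!/m!) a^m β_{n-m} P_m(x)`, where `(βₖ)` are the
coefficients of the quotient power series `A(t)/A(at)`. -/
theorem brenke_duplication_formula
    (a b : ℕ → ℂ) (ha : a 0 ≠ 0) (hb : ∀ k, b k ≠ 0)
    (α : ℂ) (hα : α ≠ 0)
    (β : ℕ → ℂ)
    (hβ : ∀ k : ℕ, ∑ j ∈ Finset.range (k + 1), a j * α ^ j * β (k - j) = a k)
    (n : ℕ) (x : ℂ) :
    brenke a b n (α * x) =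
      ∑ m ∈ Finset.range (n + 1),
        (Nat.factorial n : ℂ) / (Nat.factorial m : ℂ) * α ^ m * β (n - m) *
          brenke a b m x := by
  unfold brenke
  have hfac : ∀ m : ℕ, ((Nat.factorial m : ℂ)) ≠ 0 := fun m => by
    exact_mod_cast Nat.factorial_ne_zero m
  calc (Nat.factorial n : ℂ) * ∑ m ∈ Finset.range (n + 1), b m * a (n - m) * (α * x) ^ m
      = (Nat.factorial n : ℂ) * ∑ j ∈ Finset.range (n + 1),
          ∑ m ∈ Finset.Ico j (n + 1), α ^ m * β (n - m) * (b j * a (m - j) * x ^ j) := by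
        congr 1
        refine Finset.sum_congr rfl fun j hj => ?_
        rw [Finset.mem_range] at hj
        rw [Finset.sum_Ico_eq_sum_range]
        have h1 : n + 1 - j = (n - j) + 1 := by omega
        rw [h1]
        have : ∀ i ∈ Finset.range (n - j + 1),
            α ^ (j + i) * β (n - (j + i)) * (b j * a (j + i - j) * x ^ j)
            = (b j * x ^ j * α ^ j) * (a i * α ^ i * β (n - j - i)) := by
          intro i hi
          rw [Finset.mem_range] at hi
          have h2 : j + i - j = i := by omega
          have h3 : n - (j + i) = n - j - i := by omega
          rw [h2, h3, pow_add]
          ring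
        rw [Finset.sum_congr rfl this, ← Finset.mul_sum, hβ (n - j)]
        have h4 : n - (n - j) = j := by omega
        rw [mul_pow]
        ring
    _ = ∑ m ∈ Finset.range (n + 1),
        (Nat.factorial n : ℂ) / (Nat.factorial m : ℂ) * α ^ m * β (n - m) *
          ((Nat.factorial m : ℂ) * ∑ j ∈ Finset.range (m + 1), b j * a (m - j) * x ^ j) := by
        rw [Finset.mul_sum]
        have := Finset.sum_Ico_Ico_comm 0 (n + 1)
          (fun j m => (Nat.factorial n : ℂ) * (α ^ m * β (n - m) * (b j * a (m - j) * x ^ j)))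
        simp only [Finset.range_eq_Ico, Finset.mul_sum]
        rw [this]
        refine Finset.sum_congr rfl fun m hm => ?_
        refine Finset.sum_congr rfl fun j hj => ?_
        field_simp [hfac m]
end

section
/- Let (a_k^{(i)}), (b_k^{(i)}), i = 1,2,3, be complex sequences with a_0^{(i)} \ne 0 and b_k^{(i)} \ne 0 for all k, let P_n, R_n, S_n be the Brenke polynomials associated with (a^{(1)},b^{(1)}), (a^{(2)},b^{(2)}), (a^{(3)},b^{(3)}) respectively, and let (\hat{a}_k^{(1)}) be the coefficients of the reciprocal power series of A_1(t) = \sum a_k^{(1)} t^k, with the convention \hat{a}_j^{(1)} = 0 for j < 0. Then for all i, j and all x, R_i(x) S_j(x) = \sum_{k=0}^{i+j} L_{ij}(k) P_k(x), where L_{ij}(k) = (i!j!/k!) \sum_{n=0}^{i} \sum_{m=0}^{j} (b_n^{(2)} b_m^{(3)} / b_{n+m}^{(1)}) a_{i-n}^{(2)} a_{j-m}^{(3)} \hat{a}_{n+m-k}^{(1)}. -/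
open Finset

lemma key_lemma (a1 b1 : ℕ → ℂ) (ha1 : a1 0 ≠ 0)
    (ahat : ℕ → ℂ) (hhat0 : ahat 0 = 1 / a1 0)
    (hhat : ∀ n : ℕ, 1 ≤ n → ∑ k ∈ Finset.range (n + 1), a1 k * ahat (n - k) = 0)
    (x : ℂ) (s : ℕ) :
    ∑ k ∈ Finset.range (s + 1),
      ahat (s - k) * ∑ p ∈ Finset.range (k + 1), b1 p * a1 (k - p) * x ^ p
      = b1 s * x ^ s := by
  set A : PowerSeries ℂ := PowerSeries.mk a1 with hA
  set H : PowerSeries ℂ := PowerSeries.mk ahat with hH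
  set B : PowerSeries ℂ := PowerSeries.mk (fun p => b1 p * x ^ p) with hB
  have hAH : A * H = 1 := by
    ext n
    rw [PowerSeries.coeff_mul, Finset.Nat.sum_antidiagonal_eq_sum_range_succ_mk]
    simp only [hA, hH, PowerSeries.coeff_mk]
    rcases n with _ | n
    · simp [hhat0, ha1]
    · rw [hhat (n + 1) (by omega)]
      simp [PowerSeries.coeff_one]
  have h2 : (B * A) * H = B := by
    have : (B * A) * H = B * (A * H) := by ring
    rw [this, hAH, mul_one]
  have h3 := congrArg (PowerSeries.coeff s) h2
  rw [PowerSeries.coeff_mul, Finset.Nat.sum_antidiagonal_eq_sum_range_succ_mk] at h3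
  simp only [PowerSeries.coeff_mul, Finset.Nat.sum_antidiagonal_eq_sum_range_succ_mk,
    hA, hH, hB, PowerSeries.coeff_mk] at h3
  rw [← h3]
  refine Finset.sum_congr rfl fun k _ => ?_
  rw [mul_comm]
  congr 1
  refine Finset.sum_congr rfl fun p _ => by ring


/-- explicit linearization coefficients for three Brenke
polynomial sets:
`R_i(x) S_j(x) = ∑_{k=0}^{i+j} L_{ij}(k) P_k(x)` with
`L_{ij}(k) = (i!j!/k!) ∑_{n=0}^{i} ∑_{m=0}^{j} (b₂ₙ b₃ₘ / b₁_{n+m})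
  a₂_{i-n} a₃_{j-m} â₁_{n+m-k}`,
with the convention `â₁_j = 0` for `j < 0`. -/
theorem brenke_linearization_explicit
    (a1 b1 a2 b2 a3 b3 : ℕ → ℂ)
    (ha1 : a1 0 ≠ 0) (ha2 : a2 0 ≠ 0) (ha3 : a3 0 ≠ 0)
    (hb1 : ∀ k, b1 k ≠ 0) (hb2 : ∀ k, b2 k ≠ 0) (hb3 : ∀ k, b3 k ≠ 0)
    (ahat : ℕ → ℂ) (hhat0 : ahat 0 = 1 / a1 0)
    (hhat : ∀ n : ℕ, 1 ≤ n → ∑ k ∈ Finset.range (n + 1), a1 k * ahat (n - k) = 0)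
    (i j : ℕ) (x : ℂ) :
    brenke a2 b2 i x * brenke a3 b3 j x =
      ∑ k ∈ Finset.range (i + j + 1),
        ((Nat.factorial i : ℂ) * (Nat.factorial j : ℂ) / (Nat.factorial k : ℂ) *
            ∑ n ∈ Finset.range (i + 1), ∑ m ∈ Finset.range (j + 1),
              (b2 n * b3 m / b1 (n + m)) * a2 (i - n) * a3 (j - m) *
                (if k ≤ n + m then ahat (n + m - k) else 0)) *
          brenke a1 b1 k x := by
  have hx : ∀ k : ℕ, (Nat.factorial k : ℂ) ≠ 0 :=
    fun k => Nat.cast_ne_zero.mpr (Nat.factorial_ne_zero k)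
  have key := key_lemma a1 b1 ha1 ahat hhat0 hhat x
  -- Step 1: rewrite RHS term by term to remove factorials in denominator
  have step1 : ∀ k : ℕ,
      ((Nat.factorial i : ℂ) * (Nat.factorial j : ℂ) / (Nat.factorial k : ℂ) *
          ∑ n ∈ Finset.range (i + 1), ∑ m ∈ Finset.range (j + 1),
            (b2 n * b3 m / b1 (n + m)) * a2 (i - n) * a3 (j - m) *
              (if k ≤ n + m then ahat (n + m - k) else 0)) *
        brenke a1 b1 k x
      = ∑ n ∈ Finset.range (i + 1), ∑ m ∈ Finset.range (j + 1),
          ((Nat.factorial i : ℂ) * (Nat.factorial j : ℂ)) *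
            ((b2 n * b3 m / b1 (n + m)) * a2 (i - n) * a3 (j - m) *
              ((if k ≤ n + m then ahat (n + m - k) else 0) *
                ∑ p ∈ Finset.range (k + 1), b1 p * a1 (k - p) * x ^ p)) := by
    intro k
    unfold brenke
    rw [Finset.mul_sum, Finset.sum_mul]
    refine Finset.sum_congr rfl fun n _ => ?_
    rw [Finset.mul_sum, Finset.sum_mul]
    refine Finset.sum_congr rfl fun m _ => ?_
    split_ifs with h
    · field_simp [hx k, hb1 (n + m)]
    · simp
  rw [Finset.sum_congr rfl fun k _ => step1 k]
  rw [Finset.sum_comm]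
  have step2 : ∀ n ∈ Finset.range (i + 1),
      (∑ k ∈ Finset.range (i + j + 1), ∑ m ∈ Finset.range (j + 1),
          ((Nat.factorial i : ℂ) * (Nat.factorial j : ℂ)) *
            ((b2 n * b3 m / b1 (n + m)) * a2 (i - n) * a3 (j - m) *
              ((if k ≤ n + m then ahat (n + m - k) else 0) *
                ∑ p ∈ Finset.range (k + 1), b1 p * a1 (k - p) * x ^ p)))
      = ∑ m ∈ Finset.range (j + 1),
          ((Nat.factorial i : ℂ) * (Nat.factorial j : ℂ)) *
            ((b2 n * b3 m / b1 (n + m)) * a2 (i - n) * a3 (j - m) *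
              (b1 (n + m) * x ^ (n + m))) := by
    intro n hn
    rw [Finset.sum_comm]
    refine Finset.sum_congr rfl fun m hm => ?_
    rw [← Finset.mul_sum, ← Finset.mul_sum]
    congr 2
    have hnm : n + m + 1 ≤ i + j + 1 := by
      simp only [Finset.mem_range] at hn hm; omega
    rw [← key (n + m)]
    rw [← Finset.sum_subset (Finset.range_subset_range.mpr hnm)]
    · refine Finset.sum_congr rfl fun k hk => ?_
      simp only [Finset.mem_range] at hk
      rw [if_pos (by omega)]
    · intro k _ hk
      simp only [Finset.mem_range, not_lt] at hk
      rw [if_neg (by omega), zero_mul]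
  rw [Finset.sum_congr rfl step2]
  unfold brenke
  rw [Finset.mul_sum, Finset.sum_mul]
  refine Finset.sum_congr rfl fun n _ => ?_
  rw [Finset.mul_sum, Finset.mul_sum]
  refine Finset.sum_congr rfl fun m _ => ?_
  rw [pow_add]
  field_simp [hb1 (n + m)]
end

section
/- Let d \ge 1 be an integer, a, b \in \mathbb{C}, and \mu_1, \mu_2 > -1/2. Then for all n \in \mathbb{N} and all x, Q_n^{(d+1)}(x, b, \mu_2) = \sum_{i=0}^{\lfloor n/(d+1) \rfloor} C_{n-i(d+1)}(n) \, Q_{n-i(d+1)}^{(d+1)}(x, a, \mu_1), where C_{n-i(d+1)}(n) = (n!/(n-i(d+1))!) \sum_{k=0}^{i} (\gamma_{\mu_1}(n-k(d+1))/\gamma_{\mu_2}(n-k(d+1))) \cdot ((-a)^{i-k}/(i-k)!) \cdot (b^k/k!). -/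
open Finset

/-- The generalized Gould–Hopper polynomial
`Q_n^{(d+1)}(x,a,μ) = n! ∑_{k=0}^{⌊n/(d+1)⌋} a^k x^{n-(d+1)k} / (k! γ_μ(n-(d+1)k))`. -/
noncomputable def gghQ (d : ℕ) (a : ℂ) (μ : ℝ) (n : ℕ) (x : ℂ) : ℂ :=
  (Nat.factorial n : ℂ) *
    ∑ k ∈ Finset.range (n / (d + 1) + 1),
      a ^ k * x ^ (n - (d + 1) * k) /
        ((Nat.factorial k : ℂ) * ((dunklGamma μ (n - (d + 1) * k) : ℝ) : ℂ))

lemma dunklGamma_pos (μ : ℝ) (h : -(1/2) < μ) (n : ℕ) : 0 < dunklGamma μ n := by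
  have h2 : (0:ℝ) < μ + 1/2 := by linarith
  have hp : 0 < ∏ i ∈ Finset.range (n / 2 + n % 2), (μ + 1 / 2 + i) := by
    apply Finset.prod_pos
    intro i _
    have : (0:ℝ) ≤ i := Nat.cast_nonneg i
    linarith
  exact mul_pos (mul_pos (by positivity) (by positivity)) hp

lemma tri_s15 (N : ℕ) (f : ℕ → ℕ → ℂ) :
    ∑ i ∈ range (N+1), ∑ j ∈ range (N - i + 1), f i j
      = ∑ s ∈ range (N+1), ∑ i ∈ range (s+1), f i (s - i) := by
  rw [Finset.sum_sigma', Finset.sum_sigma']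
  refine Finset.sum_nbij' (fun p => ⟨p.1 + p.2, p.1⟩) (fun p => ⟨p.2, p.1 - p.2⟩)
    ?_ ?_ ?_ ?_ ?_
  · intro p hp
    simp only [Finset.mem_sigma, Finset.mem_range] at hp ⊢
    omega
  · intro p hp
    simp only [Finset.mem_sigma, Finset.mem_range] at hp ⊢
    omega
  · rintro ⟨p1, p2⟩ hp
    simp only [Finset.mem_sigma, Finset.mem_range] at hp
    simp
  · rintro ⟨p1, p2⟩ hp
    simp only [Finset.mem_sigma, Finset.mem_range] at hp
    simp
    omega
  · intro p hp
    simp only [Finset.mem_sigma, Finset.mem_range] at hp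
    simp only []
    congr 1
    omega

lemma key (a : ℂ) (m : ℕ) :
    ∑ t ∈ range (m+1), ((-a)^t / (Nat.factorial t : ℂ)) *
      (a^(m-t) / (Nat.factorial (m-t) : ℂ)) = if m = 0 then 1 else 0 := by
  have h1 : ∀ t ∈ range (m+1),
      ((-a)^t / (Nat.factorial t : ℂ)) * (a^(m-t) / (Nat.factorial (m-t) : ℂ))
        = ((-a)^t * a^(m-t) * (m.choose t : ℂ)) / (Nat.factorial m : ℂ) := by
    intro t ht
    rw [mem_range, Nat.lt_succ_iff] at ht
    have hc := Nat.choose_mul_factorial_mul_factorial ht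
    have hfc : (Nat.factorial m : ℂ) = (m.choose t : ℂ) * (Nat.factorial t : ℂ) *
        (Nat.factorial (m-t) : ℂ) := by exact_mod_cast hc.symm
    have ht0 : (Nat.factorial t : ℂ) ≠ 0 := Nat.cast_ne_zero.mpr (Nat.factorial_ne_zero t)
    have ht1 : (Nat.factorial (m-t) : ℂ) ≠ 0 := Nat.cast_ne_zero.mpr (Nat.factorial_ne_zero _)
    have hch : (m.choose t : ℂ) ≠ 0 := Nat.cast_ne_zero.mpr (Nat.choose_pos ht).ne'
    rw [hfc]
    field_simp
  rw [Finset.sum_congr rfl h1, ← Finset.sum_div]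
  have := add_pow (-a) a m
  rw [← this, neg_add_cancel]
  rcases m with _ | m
  · simp
  · simp [zero_pow, Nat.succ_ne_zero]

/-- connection formula between two generalized Gould–Hopper
polynomial sets. -/
theorem gghQ_connection
    (d : ℕ) (hd : 1 ≤ d) (a b : ℂ) (μ1 μ2 : ℝ)
    (h1 : -(1/2) < μ1) (h2 : -(1/2) < μ2)
    (n : ℕ) (x : ℂ) :
    gghQ d b μ2 n x =
      ∑ i ∈ Finset.range (n / (d + 1) + 1),
        ((Nat.factorial n : ℂ) / (Nat.factorial (n - i * (d + 1)) : ℂ) *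
            ∑ k ∈ Finset.range (i + 1),
              ((dunklGamma μ1 (n - k * (d + 1)) / dunklGamma μ2 (n - k * (d + 1)) : ℝ) : ℂ) *
                ((-a) ^ (i - k) / (Nat.factorial (i - k) : ℂ)) *
                (b ^ k / (Nat.factorial k : ℂ))) *
          gghQ d a μ1 (n - i * (d + 1)) x := by
  have hfac : ∀ m : ℕ, (Nat.factorial m : ℂ) ≠ 0 :=
    fun m => Nat.cast_ne_zero.mpr (Nat.factorial_ne_zero m)
  have hg1 : ∀ m : ℕ, ((dunklGamma μ1 m : ℝ) : ℂ) ≠ 0 := fun m =>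
    Complex.ofReal_ne_zero.mpr (ne_of_gt (dunklGamma_pos μ1 h1 m))
  have hg2 : ∀ m : ℕ, ((dunklGamma μ2 m : ℝ) : ℂ) ≠ 0 := fun m =>
    Complex.ofReal_ne_zero.mpr (ne_of_gt (dunklGamma_pos μ2 h2 m))
  -- Step 1 : expand each summand of the RHS into a double sum
  have step1 : ∀ i ∈ Finset.range (n / (d + 1) + 1),
      ((Nat.factorial n : ℂ) / (Nat.factorial (n - i * (d + 1)) : ℂ) *
          ∑ k ∈ Finset.range (i + 1),
            ((dunklGamma μ1 (n - k * (d + 1)) / dunklGamma μ2 (n - k * (d + 1)) : ℝ) : ℂ) *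
              ((-a) ^ (i - k) / (Nat.factorial (i - k) : ℂ)) *
              (b ^ k / (Nat.factorial k : ℂ))) *
        gghQ d a μ1 (n - i * (d + 1)) x
      = ∑ j ∈ Finset.range (n / (d + 1) - i + 1), ∑ k ∈ Finset.range (i + 1),
          (Nat.factorial n : ℂ) *
            (((dunklGamma μ1 (n - k * (d + 1)) / dunklGamma μ2 (n - k * (d + 1)) : ℝ) : ℂ) *
              ((-a) ^ (i - k) / (Nat.factorial (i - k) : ℂ)) *
              (b ^ k / (Nat.factorial k : ℂ)) *
              (a ^ j * x ^ (n - (d + 1) * (i + j)) /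
                ((Nat.factorial j : ℂ) *
                  ((dunklGamma μ1 (n - (d + 1) * (i + j)) : ℝ) : ℂ)))) := by
    intro i hi
    rw [Finset.mem_range, Nat.lt_succ_iff] at hi
    have hmul : (d + 1) * i ≤ n := by
      have h := (Nat.le_div_iff_mul_le (Nat.succ_pos d)).mp hi
      rwa [mul_comm] at h
    have hdiv : (n - i * (d + 1)) / (d + 1) = n / (d + 1) - i := by
      rw [mul_comm i (d+1)]
      exact Nat.sub_mul_div n (d+1) i
    have harg : ∀ j : ℕ, n - i * (d + 1) - (d + 1) * j = n - (d + 1) * (i + j) := by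
      intro j
      rw [Nat.sub_sub]
      congr 1
      ring
    unfold gghQ
    rw [hdiv]
    have hsum : ∑ k ∈ Finset.range (n / (d + 1) - i + 1),
          a ^ k * x ^ (n - i * (d + 1) - (d + 1) * k) /
            ((Nat.factorial k : ℂ) *
              ((dunklGamma μ1 (n - i * (d + 1) - (d + 1) * k) : ℝ) : ℂ))
        = ∑ j ∈ Finset.range (n / (d + 1) - i + 1),
          a ^ j * x ^ (n - (d + 1) * (i + j)) /
            ((Nat.factorial j : ℂ) *
              ((dunklGamma μ1 (n - (d + 1) * (i + j)) : ℝ) : ℂ)) :=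
      Finset.sum_congr rfl fun j _ => by rw [harg j]
    rw [hsum]
    rw [mul_mul_mul_comm, div_mul_cancel₀ _ (hfac (n - i * (d+1)))]
    rw [Finset.sum_mul_sum]
    rw [Finset.sum_comm]
    rw [Finset.mul_sum]
    refine Finset.sum_congr rfl fun j _ => ?_
    rw [Finset.mul_sum]
  rw [Finset.sum_congr rfl step1]
  rw [tri_s15 (n / (d + 1)) (fun i j =>
    ∑ k ∈ Finset.range (i + 1),
      (Nat.factorial n : ℂ) *
        (((dunklGamma μ1 (n - k * (d + 1)) / dunklGamma μ2 (n - k * (d + 1)) : ℝ) : ℂ) *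
          ((-a) ^ (i - k) / (Nat.factorial (i - k) : ℂ)) *
          (b ^ k / (Nat.factorial k : ℂ)) *
          (a ^ j * x ^ (n - (d + 1) * (i + j)) /
            ((Nat.factorial j : ℂ) *
              ((dunklGamma μ1 (n - (d + 1) * (i + j)) : ℝ) : ℂ)))))]
  -- Step 3 : collapse the inner double sum for each s
  have step3 : ∀ s ∈ Finset.range (n / (d + 1) + 1),
      (∑ i ∈ Finset.range (s + 1), ∑ k ∈ Finset.range (i + 1),
        (Nat.factorial n : ℂ) *
          (((dunklGamma μ1 (n - k * (d + 1)) / dunklGamma μ2 (n - k * (d + 1)) : ℝ) : ℂ) *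
            ((-a) ^ (i - k) / (Nat.factorial (i - k) : ℂ)) *
            (b ^ k / (Nat.factorial k : ℂ)) *
            (a ^ (s - i) * x ^ (n - (d + 1) * (i + (s - i))) /
              ((Nat.factorial (s - i) : ℂ) *
                ((dunklGamma μ1 (n - (d + 1) * (i + (s - i))) : ℝ) : ℂ)))))
      = (Nat.factorial n : ℂ) *
          (b ^ s * x ^ (n - (d + 1) * s) /
            ((Nat.factorial s : ℂ) * ((dunklGamma μ2 (n - (d + 1) * s) : ℝ) : ℂ))) := by
    intro s _
    have e1 : ∀ i ∈ Finset.range (s + 1),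
        (∑ k ∈ Finset.range (i + 1),
          (Nat.factorial n : ℂ) *
            (((dunklGamma μ1 (n - k * (d + 1)) / dunklGamma μ2 (n - k * (d + 1)) : ℝ) : ℂ) *
              ((-a) ^ (i - k) / (Nat.factorial (i - k) : ℂ)) *
              (b ^ k / (Nat.factorial k : ℂ)) *
              (a ^ (s - i) * x ^ (n - (d + 1) * (i + (s - i))) /
                ((Nat.factorial (s - i) : ℂ) *
                  ((dunklGamma μ1 (n - (d + 1) * (i + (s - i))) : ℝ) : ℂ)))))
        = ∑ k ∈ Finset.range (i + 1),
          (Nat.factorial n : ℂ) *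
            (((dunklGamma μ1 (n - k * (d + 1)) / dunklGamma μ2 (n - k * (d + 1)) : ℝ) : ℂ) *
              ((-a) ^ (i - k) / (Nat.factorial (i - k) : ℂ)) *
              (b ^ k / (Nat.factorial k : ℂ)) *
              (a ^ (s - i) * x ^ (n - (d + 1) * s) /
                ((Nat.factorial (s - i) : ℂ) *
                  ((dunklGamma μ1 (n - (d + 1) * s) : ℝ) : ℂ)))) := by
      intro i hi
      rw [Finset.mem_range, Nat.lt_succ_iff] at hi
      rw [Nat.add_sub_cancel' hi]
    rw [Finset.sum_congr rfl e1]
    -- transpose the triangular sum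
    have e2 := tri_s15 s (fun k t =>
      (Nat.factorial n : ℂ) *
        (((dunklGamma μ1 (n - k * (d + 1)) / dunklGamma μ2 (n - k * (d + 1)) : ℝ) : ℂ) *
          ((-a) ^ ((k + t) - k) / (Nat.factorial ((k + t) - k) : ℂ)) *
          (b ^ k / (Nat.factorial k : ℂ)) *
          (a ^ (s - (k + t)) * x ^ (n - (d + 1) * s) /
            ((Nat.factorial (s - (k + t)) : ℂ) *
              ((dunklGamma μ1 (n - (d + 1) * s) : ℝ) : ℂ)))))
    have e3 : (∑ u ∈ Finset.range (s + 1), ∑ k ∈ Finset.range (u + 1),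
        (Nat.factorial n : ℂ) *
          (((dunklGamma μ1 (n - k * (d + 1)) / dunklGamma μ2 (n - k * (d + 1)) : ℝ) : ℂ) *
            ((-a) ^ ((k + (u - k)) - k) / (Nat.factorial ((k + (u - k)) - k) : ℂ)) *
            (b ^ k / (Nat.factorial k : ℂ)) *
            (a ^ (s - (k + (u - k))) * x ^ (n - (d + 1) * s) /
              ((Nat.factorial (s - (k + (u - k))) : ℂ) *
                ((dunklGamma μ1 (n - (d + 1) * s) : ℝ) : ℂ)))))
        = ∑ u ∈ Finset.range (s + 1), ∑ k ∈ Finset.range (u + 1),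
        (Nat.factorial n : ℂ) *
          (((dunklGamma μ1 (n - k * (d + 1)) / dunklGamma μ2 (n - k * (d + 1)) : ℝ) : ℂ) *
            ((-a) ^ (u - k) / (Nat.factorial (u - k) : ℂ)) *
            (b ^ k / (Nat.factorial k : ℂ)) *
            (a ^ (s - u) * x ^ (n - (d + 1) * s) /
              ((Nat.factorial (s - u) : ℂ) *
                ((dunklGamma μ1 (n - (d + 1) * s) : ℝ) : ℂ)))) := by
      refine Finset.sum_congr rfl fun u hu => Finset.sum_congr rfl fun k hk => ?_
      rw [Finset.mem_range, Nat.lt_succ_iff] at hu hk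
      rw [Nat.add_sub_cancel' hk]
    rw [← e3, ← e2]
    -- now evaluate ∑_k ∑_t
    have e4 : ∀ k ∈ Finset.range (s + 1),
        (∑ t ∈ Finset.range (s - k + 1),
          (Nat.factorial n : ℂ) *
            (((dunklGamma μ1 (n - k * (d + 1)) / dunklGamma μ2 (n - k * (d + 1)) : ℝ) : ℂ) *
              ((-a) ^ ((k + t) - k) / (Nat.factorial ((k + t) - k) : ℂ)) *
              (b ^ k / (Nat.factorial k : ℂ)) *
              (a ^ (s - (k + t)) * x ^ (n - (d + 1) * s) /
                ((Nat.factorial (s - (k + t)) : ℂ) *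
                  ((dunklGamma μ1 (n - (d + 1) * s) : ℝ) : ℂ)))))
        = if k = s then
            (Nat.factorial n : ℂ) *
              (((dunklGamma μ1 (n - k * (d + 1)) / dunklGamma μ2 (n - k * (d + 1)) : ℝ) : ℂ) *
                (b ^ k / (Nat.factorial k : ℂ)) *
                (x ^ (n - (d + 1) * s) / ((dunklGamma μ1 (n - (d + 1) * s) : ℝ) : ℂ)))
          else 0 := by
      intro k hk
      rw [Finset.mem_range, Nat.lt_succ_iff] at hk
      have e5 : ∀ t ∈ Finset.range (s - k + 1),
          (Nat.factorial n : ℂ) *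
            (((dunklGamma μ1 (n - k * (d + 1)) / dunklGamma μ2 (n - k * (d + 1)) : ℝ) : ℂ) *
              ((-a) ^ ((k + t) - k) / (Nat.factorial ((k + t) - k) : ℂ)) *
              (b ^ k / (Nat.factorial k : ℂ)) *
              (a ^ (s - (k + t)) * x ^ (n - (d + 1) * s) /
                ((Nat.factorial (s - (k + t)) : ℂ) *
                  ((dunklGamma μ1 (n - (d + 1) * s) : ℝ) : ℂ))))
          = ((Nat.factorial n : ℂ) *
              (((dunklGamma μ1 (n - k * (d + 1)) / dunklGamma μ2 (n - k * (d + 1)) : ℝ) : ℂ) *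
                (b ^ k / (Nat.factorial k : ℂ)) *
                (x ^ (n - (d + 1) * s) / ((dunklGamma μ1 (n - (d + 1) * s) : ℝ) : ℂ)))) *
            (((-a) ^ t / (Nat.factorial t : ℂ)) *
              (a ^ ((s - k) - t) / (Nat.factorial ((s - k) - t) : ℂ))) := by
        intro t ht
        have h6 : (k + t) - k = t := by omega
        have h7 : s - (k + t) = (s - k) - t := by omega
        rw [h6, h7]
        ring
      rw [Finset.sum_congr rfl e5, ← Finset.mul_sum, key]
      by_cases h : k = s
      · have : s - k = 0 := by omega
        simp [this, h]
      · have : s - k ≠ 0 := by omega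
        simp [this, h]
    rw [Finset.sum_congr rfl e4]
    rw [Finset.sum_ite_eq' (Finset.range (s + 1)) s]
    simp only [Finset.mem_range, Nat.lt_succ_iff, le_refl, if_true]
    have hc : n - s * (d + 1) = n - (d + 1) * s := by rw [mul_comm]
    rw [hc, Complex.ofReal_div]
    have hA := hg1 (n - (d + 1) * s)
    have hB := hg2 (n - (d + 1) * s)
    have hS := hfac s
    field_simp
  rw [Finset.sum_congr rfl step3]
  unfold gghQ
  rw [Finset.mul_sum]
end

section
/- Let d \ge 1 be an integer, a, b \in \mathbb{C}, and \mu_2 > \mu_1 > -1/2. Then for all n \in \mathbb{N} and all 0 \le i \le \lfloor n/(d+1) \rfloor, the connection coefficient C_{n-i(d+1)}(n) = (n!/(n-i(d+1))!) \sum_{k=0}^{i} (\gamma_{\mu_1}(n-k(d+1))/\gamma_{\mu_2}(n-k(d+1))) ((-a)^{i-k}/(i-k)!) (b^k/k!) admits the integral representation C_{n-i(d+1)}(n) = (n! / (i! (n-i(d+1))! \, \beta(\mu_1+1/2, \mu_2-\mu_1))) \int_{-1}^{1} t^{n-i(d+1)} |t|^{2\mu_1} (b - a t^{d+1})^i (1-t)^{\mu_2-\mu_1-1}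 (1+t)^{\mu_2-\mu_1} \, dt. -/
open Finset

section Aux

open intervalIntegral MeasureTheory Set

lemma dunklGamma_pos_s16 {μ : ℝ} (hμ : -(1/2) < μ) (j : ℕ) : 0 < dunklGamma μ j := by
  unfold dunklGamma
  refine mul_pos (by positivity) (Finset.prod_pos fun i _ => ?_)
  have : (0:ℝ) ≤ i := Nat.cast_nonneg i
  linarith


-- L1
lemma gamma_add_nat_s16 (x : ℝ) (hx : 0 < x) (q : ℕ) :
    Real.Gamma (x + q) = (∏ i ∈ Finset.range q, (x + i)) * Real.Gamma x := by
  induction q with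
  | zero => simp
  | succ q ih =>
    have hxq : (0:ℝ) < x + q := by positivity
    have : x + (q+1 : ℕ) = (x + q) + 1 := by push_cast; ring
    rw [this, Real.Gamma_add_one hxq.ne', ih, Finset.prod_range_succ]
    ring


lemma realBeta_pos {x y : ℝ} (hx : 0 < x) (hy : 0 < y) : 0 < realBeta x y := by
  unfold realBeta
  have := Real.Gamma_pos_of_pos hx
  have := Real.Gamma_pos_of_pos hy
  have := Real.Gamma_pos_of_pos (by linarith : (0:ℝ) < x + y)
  positivity

-- beta shift
lemma realBeta_add_nat {x y : ℝ} (hx : 0 < x) (hy : 0 < y) (q : ℕ) :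
    realBeta (x + q) y =
      realBeta x y * ((∏ i ∈ Finset.range q, (x + i)) / (∏ i ∈ Finset.range q, (x + y + i))) := by
  unfold realBeta
  have h1 := gamma_add_nat_s16 x hx q
  have h2 := gamma_add_nat_s16 (x + y) (by linarith) q
  have e : x + (q:ℝ) + y = (x + y) + q := by ring
  rw [h1, e, h2]
  have hP2 : (∏ i ∈ Finset.range q, (x + y + i)) ≠ 0 := by
    refine Finset.prod_ne_zero_iff.mpr fun i _ => ?_
    positivity
  have hG : Real.Gamma (x + y) ≠ 0 := (Real.Gamma_pos_of_pos (by linarith)).ne'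
  field_simp

lemma ofReal_integrand (x y : ℝ) :
    ∀ u ∈ Set.uIcc (0:ℝ) 1,
      ((fun u : ℝ => ((u ^ (x-1) * (1-u) ^ (y-1) : ℝ) : ℂ)) u) =
      (fun u : ℝ => (u:ℂ) ^ ((x:ℂ)-1) * ((1:ℂ)-u) ^ ((y:ℂ)-1)) u := by
  intro u hu
  rw [Set.uIcc_of_le (by norm_num : (0:ℝ) ≤ 1)] at hu
  obtain ⟨h0, h1⟩ := hu
  push_cast
  rw [Complex.ofReal_cpow h0, Complex.ofReal_cpow (by linarith)]
  push_cast
  ring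

lemma realBeta_integral {x y : ℝ} (hx : 0 < x) (hy : 0 < y) :
    ∫ u in (0:ℝ)..1, u ^ (x-1) * (1-u) ^ (y-1) = realBeta x y := by
  have key : ((∫ u in (0:ℝ)..1, u ^ (x-1) * (1-u) ^ (y-1) : ℝ) : ℂ)
      = Complex.betaIntegral x y := by
    rw [← intervalIntegral.integral_ofReal]
    rw [Complex.betaIntegral]
    exact intervalIntegral.integral_congr (fun u hu => ofReal_integrand x y u hu)
  have hG : Complex.Gamma ((x:ℂ) + (y:ℂ)) ≠ 0 := by
    rw [← Complex.ofReal_add, Complex.Gamma_ofReal]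
    exact_mod_cast (Real.Gamma_pos_of_pos (by linarith)).ne'
  have := Complex.Gamma_mul_Gamma_eq_betaIntegral
    (by simpa using hx : 0 < Complex.re (x:ℂ)) (by simpa using hy : 0 < Complex.re (y:ℂ))
  rw [← key] at this
  have : ((Real.Gamma x * Real.Gamma y : ℝ) : ℂ)
      = ((Real.Gamma (x+y) * ∫ u in (0:ℝ)..1, u ^ (x-1) * (1-u) ^ (y-1) : ℝ) : ℂ) := by
    push_cast
    rw [← Complex.Gamma_ofReal, ← Complex.Gamma_ofReal, ← Complex.Gamma_ofReal] at *
    push_cast at this ⊢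
    rw [this]
  have h2 := Complex.ofReal_injective this
  have hGr : Real.Gamma (x+y) ≠ 0 := (Real.Gamma_pos_of_pos (by linarith)).ne'
  unfold realBeta
  field_simp
  linarith [h2]

lemma realBeta_integrable {x y : ℝ} (hx : 0 < x) (hy : 0 < y) :
    IntervalIntegrable (fun u : ℝ => u ^ (x-1) * (1-u) ^ (y-1)) volume 0 1 := by
  have hc := Complex.betaIntegral_convergent
    (by simpa using hx : 0 < Complex.re (x:ℂ)) (by simpa using hy : 0 < Complex.re (y:ℂ))
  rw [intervalIntegrable_iff] at hc ⊢
  have : (fun u : ℝ => u ^ (x-1) * (1-u) ^ (y-1))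
      =ᵐ[volume.restrict (Set.uIoc (0:ℝ) 1)]
      (fun u : ℝ => ((u:ℂ) ^ ((x:ℂ)-1) * ((1:ℂ)-u) ^ ((y:ℂ)-1)).re) := by
    refine (ae_restrict_iff' measurableSet_uIoc).mpr (ae_of_all _ fun u hu => ?_)
    have := ofReal_integrand x y u (Set.uIoc_subset_uIcc hu)
    simp only at this
    simp only [← this, Complex.ofReal_re]
  exact (IntegrableOn.congr_fun_ae hc.re this.symm : _)

-- L5
lemma int_G01 {r s : ℝ} (hr : -1 < r) (hs : 0 < s) :
    IntervalIntegrable (fun t : ℝ => t ^ r * (1 - t^2) ^ (s-1)) volume 0 1 := by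
  have p1 : IntervalIntegrable (fun t : ℝ => t ^ r * (1 - t^2) ^ (s-1)) volume 0 (1/2) := by
    refine (intervalIntegral.intervalIntegrable_rpow' hr).mul_continuousOn ?_
    refine ContinuousOn.rpow_const (by fun_prop) fun t ht => Or.inl ?_
    rw [Set.uIcc_of_le (by norm_num : (0:ℝ) ≤ 1/2)] at ht
    nlinarith [ht.1, ht.2]
  have p2 : IntervalIntegrable (fun t : ℝ => t ^ r * (1 - t^2) ^ (s-1)) volume (1/2) 1 := by
    have hbase : IntervalIntegrable (fun t : ℝ => (1 - t) ^ (s-1)) volume (1/2) 1 := by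
      have := ((intervalIntegral.intervalIntegrable_rpow' (by linarith : (-1:ℝ) < s - 1)
        (a := 0) (b := 1/2)).comp_sub_left 1).symm
      norm_num at this
      exact this
    have hmul : IntervalIntegrable
        (fun t : ℝ => (1 - t) ^ (s-1) * (t ^ r * (1 + t) ^ (s-1))) volume (1/2) 1 := by
      refine hbase.mul_continuousOn ?_
      rw [Set.uIcc_of_le (by norm_num : (1:ℝ)/2 ≤ 1)]
      refine ContinuousOn.mul ?_ ?_
      · exact ContinuousOn.rpow_const (by fun_prop) fun t ht => Or.inl (by nlinarith [ht.1])
      · exact ContinuousOn.rpow_const (by fun_prop) fun t ht => Or.inl (by nlinarith [ht.1])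
    rw [intervalIntegrable_iff] at hmul ⊢
    refine hmul.congr_fun ?_ measurableSet_uIoc
    intro t ht
    rw [Set.uIoc_of_le (by norm_num : (1:ℝ)/2 ≤ 1)] at ht
    have h1 : (0:ℝ) ≤ 1 - t := by linarith [ht.2]
    have h2 : (0:ℝ) ≤ 1 + t := by linarith [ht.1]
    show (1 - t) ^ (s-1) * (t ^ r * (1 + t) ^ (s-1)) = t ^ r * (1 - t^2) ^ (s-1)
    rw [show (1:ℝ) - t^2 = (1-t)*(1+t) by ring, Real.mul_rpow h1 h2]
    ring
  exact p1.trans p2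

-- L6
lemma int_G01_eval {r s : ℝ} (hr : -1 < r) (hs : 0 < s) :
    ∫ t in (0:ℝ)..1, t ^ r * (1 - t^2) ^ (s-1) = (1/2) * realBeta ((r+1)/2) s := by
  set g : ℝ → ℝ := fun u => u ^ ((r-1)/2) * (1-u) ^ (s-1) with hg
  have hx : (0:ℝ) < (r+1)/2 := by linarith
  have key : ∫ t in (0:ℝ)..1, (g ∘ (fun t => t^2)) t * (2*t) = ∫ u in (0:ℝ)..1, g u := by
    have h01 : ((fun t : ℝ => t^2) '' Set.uIcc 0 1) ⊆ Set.Icc 0 1 := by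
      rintro _ ⟨t, ht, rfl⟩
      rw [Set.uIcc_of_le (by norm_num : (0:ℝ) ≤ 1), Set.mem_Icc] at ht
      refine ⟨by positivity, ?_⟩
      dsimp only
      nlinarith [ht.1, ht.2]
    have := intervalIntegral.integral_comp_mul_deriv''' (a := 0) (b := 1)
      (f := fun t => t^2) (f' := fun t => 2*t) (g := g)
      (by fun_prop)
      (fun x hx => by
        simpa using ((hasDerivAt_pow 2 x).hasDerivWithinAt (s := Set.Ioi x)))
      ?_ ?_ ?_
    · simpa using this
    · -- continuity of g on image of Ioo
      have himg : ((fun t : ℝ => t^2) '' Set.Ioo (min (0:ℝ) 1) (max 0 1)) ⊆ Set.Ioo 0 1 := by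
        rintro _ ⟨t, ht, rfl⟩
        simp only [min_eq_left zero_le_one, max_eq_right zero_le_one, Set.mem_Ioo] at ht ⊢
        constructor <;> nlinarith [ht.1, ht.2]
      refine ContinuousOn.mono ?_ himg
      refine ContinuousOn.mul ?_ ?_
      · exact ContinuousOn.rpow_const (by fun_prop) fun t ht => Or.inl (ne_of_gt ht.1)
      · refine ContinuousOn.rpow_const (by fun_prop) fun t ht => Or.inl ?_
        simp only [Set.mem_Ioo] at ht
        intro h
        have := sub_eq_zero.mp h
        linarith [ht.2]
    · -- IntegrableOn g on image uIcc
      refine IntegrableOn.mono_set ?_ h01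
      have hb := realBeta_integrable (x := (r+1)/2) (y := s) hx hs
      rw [intervalIntegrable_iff, Set.uIoc_of_le (by norm_num : (0:ℝ) ≤ 1)] at hb
      rw [integrableOn_Icc_iff_integrableOn_Ioc]
      refine hb.congr_fun (fun u hu => ?_) measurableSet_Ioc
      show u ^ ((r+1)/2 - 1) * (1-u) ^ (s-1) = g u
      rw [hg, show (r+1)/2 - 1 = (r-1)/2 by ring]
    · -- IntegrableOn composed
      have hb := (int_G01 hr hs).const_mul 2
      rw [intervalIntegrable_iff, Set.uIoc_of_le (by norm_num : (0:ℝ) ≤ 1)] at hb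
      rw [Set.uIcc_of_le (by norm_num : (0:ℝ) ≤ 1), integrableOn_Icc_iff_integrableOn_Ioc]
      refine hb.congr_fun (fun t ht => ?_) measurableSet_Ioc
      obtain ⟨ht0, ht1⟩ := ht
      show 2 * (t ^ r * (1 - t^2) ^ (s-1)) = (g ∘ (fun t => t^2)) t * (2*t)
      simp only [Function.comp, hg]
      have h2 : ((t:ℝ)^2) ^ ((r-1)/2) = t ^ (r-1) := by
        rw [← Real.rpow_natCast t 2, ← Real.rpow_mul (le_of_lt ht0)]
        congr 1; ring
      have h3 : t ^ r = t ^ (r-1) * t := by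
        nth_rewrite 1 [show r = (r-1) + 1 by ring]
        rw [Real.rpow_add ht0, Real.rpow_one]
      rw [h2, h3]; ring
  -- now conclude
  have lhs_eq : ∫ t in (0:ℝ)..1, (g ∘ (fun t => t^2)) t * (2*t)
      = 2 * ∫ t in (0:ℝ)..1, t ^ r * (1 - t^2) ^ (s-1) := by
    rw [← intervalIntegral.integral_const_mul]
    refine intervalIntegral.integral_congr_ae (MeasureTheory.ae_of_all _ fun t ht => ?_)
    rw [Set.uIoc_of_le (by norm_num : (0:ℝ) ≤ 1)] at ht
    obtain ⟨ht0, ht1⟩ := ht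
    show (g ∘ (fun t => t^2)) t * (2*t) = 2 * (t ^ r * (1 - t^2) ^ (s-1))
    simp only [Function.comp, hg]
    have h2 : ((t:ℝ)^2) ^ ((r-1)/2) = t ^ (r-1) := by
      rw [← Real.rpow_natCast t 2, ← Real.rpow_mul (le_of_lt ht0)]
      congr 1; ring
    have h3 : t ^ r = t ^ (r-1) * t := by
      nth_rewrite 1 [show r = (r-1) + 1 by ring]
      rw [Real.rpow_add ht0, Real.rpow_one]
    rw [h2, h3]; ring
  have rhs_eq : ∫ u in (0:ℝ)..1, g u = realBeta ((r+1)/2) s := by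
    rw [← realBeta_integral hx hs]
    refine intervalIntegral.integral_congr fun u hu => ?_
    show g u = u ^ ((r+1)/2 - 1) * (1-u) ^ (s-1)
    rw [hg, show (r+1)/2 - 1 = (r-1)/2 by ring]
  rw [lhs_eq, rhs_eq] at key
  linarith [key]

section G
variable {μ ν : ℝ} (hμ : -(1/2) < μ) (hν : 0 < ν) (j : ℕ)

lemma G_eq {t : ℝ} (ht0 : 0 < t) :
    t^j * (t^2)^μ * (1-t^2)^(ν-1) = t ^ ((j:ℝ) + 2*μ) * (1-t^2)^(ν-1) := by
  congr 1
  rw [Real.rpow_add ht0, Real.rpow_natCast]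
  congr 1
  rw [← Real.rpow_natCast t 2, ← Real.rpow_mul ht0.le]
  norm_num

include hμ hν in
lemma int_G_01 : IntervalIntegrable (fun t : ℝ => t^j * (t^2)^μ * (1-t^2)^(ν-1)) volume 0 1 := by
  have hr : (-1:ℝ) < (j:ℝ) + 2*μ := by
    have : (0:ℝ) ≤ (j:ℝ) := Nat.cast_nonneg j
    linarith
  have hb := int_G01 hr hν
  rw [intervalIntegrable_iff, Set.uIoc_of_le (by norm_num : (0:ℝ) ≤ 1)] at hb ⊢
  exact hb.congr_fun (fun t ht => (G_eq j ht.1).symm) measurableSet_Ioc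

include hμ hν in
lemma int_G_01_eval :
    ∫ t in (0:ℝ)..1, t^j * (t^2)^μ * (1-t^2)^(ν-1)
      = (1/2) * realBeta (((j:ℝ) + 2*μ + 1)/2) ν := by
  have hr : (-1:ℝ) < (j:ℝ) + 2*μ := by
    have : (0:ℝ) ≤ (j:ℝ) := Nat.cast_nonneg j
    linarith
  rw [← int_G01_eval hr hν]
  refine intervalIntegral.integral_congr_ae (MeasureTheory.ae_of_all _ fun t ht => ?_)
  rw [Set.uIoc_of_le (by norm_num : (0:ℝ) ≤ 1)] at ht
  exact G_eq j ht.1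

include hμ hν in
lemma int_G_neg : IntervalIntegrable (fun t : ℝ => t^j * (t^2)^μ * (1-t^2)^(ν-1)) volume (-1) 0 := by
  have h1 := (int_G_01 hμ hν j).symm
  have h2 : IntervalIntegrable
      (fun t : ℝ => ((-1:ℝ))^j * (t^j * (t^2)^μ * (1-t^2)^(ν-1))) volume 1 0 :=
    h1.const_mul _
  have h3 : (fun t : ℝ => ((-1:ℝ))^j * (t^j * (t^2)^μ * (1-t^2)^(ν-1)))
      = fun t : ℝ => ((-t)^j * ((-t)^2)^μ * (1-(-t)^2)^(ν-1)) := by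
    funext t
    rw [neg_pow]
    ring_nf
  rw [h3] at h2
  have := (IntervalIntegrable.iff_comp_neg
    (f := fun t : ℝ => t^j * (t^2)^μ * (1-t^2)^(ν-1)) (a := 0) (b := -1)).mpr
  simp only [neg_zero, neg_neg] at this
  exact ((this h2.symm).symm : _)

include hμ hν in
lemma int_G_eval :
    ∫ t in (-1:ℝ)..1, t^j * (t^2)^μ * (1-t^2)^(ν-1)
      = (1 + (-1:ℝ)^j) * ((1/2) * realBeta (((j:ℝ) + 2*μ + 1)/2) ν) := by
  have hsplit := intervalIntegral.integral_add_adjacent_intervals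
    (int_G_neg hμ hν j) (int_G_01 hμ hν j)
  have hneg : ∫ t in (-1:ℝ)..0, t^j * (t^2)^μ * (1-t^2)^(ν-1)
      = (-1:ℝ)^j * ∫ t in (0:ℝ)..1, t^j * (t^2)^μ * (1-t^2)^(ν-1) := by
    have hc := intervalIntegral.integral_comp_neg (a := (0:ℝ)) (b := 1)
      (fun t : ℝ => t^j * (t^2)^μ * (1-t^2)^(ν-1))
    simp only [neg_zero] at hc
    rw [← hc, ← intervalIntegral.integral_const_mul]
    refine intervalIntegral.integral_congr fun t _ => ?_
    rw [neg_pow]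
    ring_nf
  rw [← hsplit, hneg, int_G_01_eval hμ hν j]
  ring
end G

section G
variable {μ ν : ℝ} (hμ : -(1/2) < μ) (hν : 0 < ν) (j : ℕ)




include hμ hν in
lemma int_G : IntervalIntegrable (fun t : ℝ => t^j * (t^2)^μ * (1-t^2)^(ν-1)) volume (-1) 1 :=
  (int_G_neg hμ hν j).trans (int_G_01 hμ hν j)

-- pointwise decomposition
lemma F_decomp {t : ℝ} (ht1 : -1 < t) (ht2 : t < 1) :
    t^j * |t|^(2*μ) * (1-t)^(ν-1) * (1+t)^ν
      = t^j * (t^2)^μ * (1-t^2)^(ν-1) + t^(j+1) * (t^2)^μ * (1-t^2)^(ν-1) := by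
  have habs : |t|^(2*μ) = (t^2)^μ := by
    rw [← sq_abs t, ← Real.rpow_natCast |t| 2, ← Real.rpow_mul (abs_nonneg t)]
    norm_num
  have hplus : (1+t)^ν = (1+t)^(ν-1) * (1+t) := by
    nth_rewrite 1 [show ν = (ν-1) + 1 by ring]
    rw [Real.rpow_add (by linarith), Real.rpow_one]
  have hmul : (1-t)^(ν-1) * (1+t)^(ν-1) = (1-t^2)^(ν-1) := by
    rw [← Real.mul_rpow (by linarith) (by linarith)]
    congr 1; ring
  rw [habs, hplus, ← hmul, pow_succ]
  ring
end G

-- the F-side lemmas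
section F
variable {μ1 μ2 : ℝ} (h1 : -(1/2) < μ1) (h2 : μ1 < μ2) (j : ℕ)

include h1 h2 in
lemma ae_F_decomp :
    ∀ᵐ t : ℝ ∂(volume.restrict (Set.uIoc (-1:ℝ) 1)),
      t^j * |t|^(2*μ1) * (1-t)^(μ2-μ1-1) * (1+t)^(μ2-μ1)
        = t^j * (t^2)^μ1 * (1-t^2)^(μ2-μ1-1)
          + t^(j+1) * (t^2)^μ1 * (1-t^2)^(μ2-μ1-1) := by
  have hae : ∀ᵐ t : ℝ ∂volume, t ≠ 1 := by
    rw [MeasureTheory.ae_iff]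
    simp only [not_not, Set.setOf_eq_eq_singleton]
    exact measure_singleton 1
  have hae' := MeasureTheory.ae_restrict_of_ae (μ := volume) (s := Set.uIoc (-1:ℝ) 1) hae
  have hmem := MeasureTheory.ae_restrict_mem (μ := volume) (measurableSet_uIoc (a := (-1:ℝ)) (b := 1))
  filter_upwards [hae', hmem] with t ht htm
  rw [Set.uIoc_of_le (by norm_num : (-1:ℝ) ≤ 1)] at htm
  exact F_decomp j htm.1 (lt_of_le_of_ne htm.2 ht)

include h1 h2 in
lemma int_F : IntervalIntegrable
    (fun t : ℝ => t^j * |t|^(2*μ1) * (1-t)^(μ2-μ1-1) * (1+t)^(μ2-μ1)) volume (-1) 1 := by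
  have hν : (0:ℝ) < μ2 - μ1 := by linarith
  have hG := ((int_G h1 hν j).add (int_G h1 hν (j+1)))
  rw [intervalIntegrable_iff] at hG ⊢
  have hEE : (fun t : ℝ => t^j * |t|^(2*μ1) * (1-t)^(μ2-μ1-1) * (1+t)^(μ2-μ1))
      =ᵐ[volume.restrict (Set.uIoc (-1:ℝ) 1)]
      (fun t : ℝ => t^j * (t^2)^μ1 * (1-t^2)^(μ2-μ1-1)
        + t^(j+1) * (t^2)^μ1 * (1-t^2)^(μ2-μ1-1)) := ae_F_decomp h1 h2 j
  exact hG.congr_fun_ae hEE.symm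

include h1 h2 in
lemma int_F_eval :
    ∫ t in (-1:ℝ)..1, t^j * |t|^(2*μ1) * (1-t)^(μ2-μ1-1) * (1+t)^(μ2-μ1)
      = realBeta (μ1 + 1/2) (μ2-μ1) * (dunklGamma μ1 j / dunklGamma μ2 j) := by
  have hν : (0:ℝ) < μ2 - μ1 := by linarith
  have step1 : ∫ t in (-1:ℝ)..1, t^j * |t|^(2*μ1) * (1-t)^(μ2-μ1-1) * (1+t)^(μ2-μ1)
      = (∫ t in (-1:ℝ)..1, t^j * (t^2)^μ1 * (1-t^2)^(μ2-μ1-1))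
        + ∫ t in (-1:ℝ)..1, t^(j+1) * (t^2)^μ1 * (1-t^2)^(μ2-μ1-1) := by
    rw [← intervalIntegral.integral_add (int_G h1 hν j) (int_G h1 hν (j+1))]
    apply intervalIntegral.integral_congr_ae
    have := ae_F_decomp h1 h2 j
    rwa [MeasureTheory.ae_restrict_iff' measurableSet_uIoc] at this
  rw [step1, int_G_eval h1 hν j, int_G_eval h1 hν (j+1)]
  -- closed form
  have key : ∀ q : ℕ, q = j/2 + j%2 →
      realBeta (μ1 + 1/2 + q) (μ2 - μ1)
        = realBeta (μ1 + 1/2) (μ2-μ1) * (dunklGamma μ1 j / dunklGamma μ2 j) := by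
    intro q hq
    have hx : (0:ℝ) < μ1 + 1/2 := by linarith
    rw [realBeta_add_nat hx hν q]
    congr 1
    have hprod : ∏ i ∈ Finset.range q, (μ1 + 1/2 + (μ2-μ1) + (i:ℝ))
        = ∏ i ∈ Finset.range q, (μ2 + 1/2 + (i:ℝ)) := by
      refine Finset.prod_congr rfl fun i _ => by ring
    rw [hprod]
    unfold dunklGamma
    have hc : (2:ℝ)^j * (Nat.factorial (j / 2) : ℝ) ≠ 0 := by positivity
    rw [hq]
    rw [mul_div_mul_left _ _ hc]
  rcases Nat.even_or_odd j with he | ho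
  · obtain ⟨p, hp⟩ := he
    have hepow : (-1:ℝ)^j = 1 := (by simpa [hp] using (Even.add_self p).neg_one_pow : _)
    have hopow : (-1:ℝ)^(j+1) = -1 := by
      rw [pow_succ, hepow]; ring
    have harg : ((j:ℝ) + 2*μ1 + 1)/2 = μ1 + 1/2 + (p:ℕ) := by
      rw [hp]; push_cast; ring
    have hqq : p = j/2 + j%2 := by omega
    rw [hepow, hopow, harg, key p hqq]
    ring
  · obtain ⟨p, hp⟩ := ho
    have hopow : (-1:ℝ)^j = -1 := by
      rw [hp, pow_succ, pow_mul]; norm_num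
    have hepow : (-1:ℝ)^(j+1) = 1 := by
      rw [pow_succ, hopow]; ring
    have harg : ((j:ℝ) + 1 + 2*μ1 + 1)/2 = μ1 + 1/2 + ((p+1:ℕ):ℝ) := by
      rw [hp]; push_cast; ring
    have hqq : p + 1 = j/2 + j%2 := by omega
    rw [hopow, hepow]
    push_cast
    rw [show ((j:ℝ) + 1 + 2*μ1 + 1)/2 = ((j:ℝ)+1+2*μ1+1)/2 from rfl]
    have := key (p+1) hqq
    rw [show ((j:ℝ)+1+2*μ1+1)/2 = μ1 + 1/2 + ((p+1:ℕ):ℝ) from harg] at *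
    rw [this]
    ring
end F


set_option maxHeartbeats 1000000 in
/-- integral representation of the connection coefficients
between two generalized Gould–Hopper polynomial sets. -/
theorem gghQ_connection_coeff_integral_rep
    (d : ℕ) (hd : 1 ≤ d) (a b : ℂ) (μ1 μ2 : ℝ)
    (h1 : -(1/2) < μ1) (h2 : μ1 < μ2)
    (n i : ℕ) (hi : i ≤ n / (d + 1)) :
    (Nat.factorial n : ℂ) / (Nat.factorial (n - i * (d + 1)) : ℂ) *
        ∑ k ∈ Finset.range (i + 1),
          ((dunklGamma μ1 (n - k * (d + 1)) / dunklGamma μ2 (n - k * (d + 1)) : ℝ) : ℂ) *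
            ((-a) ^ (i - k) / (Nat.factorial (i - k) : ℂ)) *
            (b ^ k / (Nat.factorial k : ℂ)) =
      (Nat.factorial n : ℂ) /
          ((Nat.factorial i : ℂ) * (Nat.factorial (n - i * (d + 1)) : ℂ) *
            ((realBeta (μ1 + 1/2) (μ2 - μ1) : ℝ) : ℂ)) *
        ∫ t in (-1:ℝ)..1,
          ((t ^ (n - i * (d + 1)) * |t| ^ (2 * μ1) *
              (1 - t) ^ (μ2 - μ1 - 1) * (1 + t) ^ (μ2 - μ1) : ℝ) : ℂ) *
            (b - a * (t : ℂ) ^ (d + 1)) ^ i := by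
  have hm : i * (d + 1) ≤ n := (Nat.le_div_iff_mul_le (Nat.succ_pos d)).mp hi
  have hnk' : ∀ k, k ≤ i → (n - i * (d+1)) + (d+1)*(i-k) = n - k * (d+1) := by
    intro k hk
    have h3 : k*(d+1) ≤ i*(d+1) := Nat.mul_le_mul_right _ hk
    rw [mul_comm (d+1) (i-k), Nat.sub_mul]
    omega
  set m := n - i * (d + 1) with hmdef
  -- complex-valued integrability of the real weight
  have hint : ∀ j : ℕ, IntervalIntegrable
      (fun t : ℝ => ((t^j * |t|^(2*μ1) * (1-t)^(μ2-μ1-1) * (1+t)^(μ2-μ1) : ℝ) : ℂ))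
      volume (-1) 1 := by
    intro j
    have := int_F h1 h2 j
    rw [intervalIntegrable_iff] at this ⊢
    exact this.ofReal
  -- pointwise expansion of the binomial
  have expand : ∀ t : ℝ,
      ((t ^ m * |t| ^ (2 * μ1) * (1 - t) ^ (μ2 - μ1 - 1) * (1 + t) ^ (μ2 - μ1) : ℝ) : ℂ) *
          (b - a * (t : ℂ) ^ (d + 1)) ^ i
        = ∑ k ∈ Finset.range (i + 1),
            ((t ^ (n - k * (d+1)) * |t| ^ (2 * μ1) * (1 - t) ^ (μ2 - μ1 - 1) *
                (1 + t) ^ (μ2 - μ1) : ℝ) : ℂ) *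
              (b ^ k * (-a) ^ (i - k) * (Nat.choose i k : ℂ)) := by
    intro t
    rw [show b - a*(t:ℂ)^(d+1) = b + -(a*(t:ℂ)^(d+1)) from sub_eq_add_neg _ _, add_pow, Finset.mul_sum]
    refine Finset.sum_congr rfl fun k hk => ?_
    have hk' : k ≤ i := Nat.lt_succ_iff.mp (Finset.mem_range.mp hk)
    have hnk : m + (d+1)*(i-k) = n - k * (d+1) := hnk' k hk'
    have hpow : (-(a * (t:ℂ) ^ (d+1))) ^ (i-k)
        = (-a) ^ (i-k) * (t:ℂ) ^ ((d+1)*(i-k)) := by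
      rw [← neg_mul, mul_pow, ← pow_mul]
    rw [hpow]
    push_cast
    rw [show ((t:ℂ)) ^ (n - k*(d+1)) = (t:ℂ) ^ m * (t:ℂ) ^ ((d+1)*(i-k)) by
      rw [← pow_add, hnk]]
    ring
  have hfun : (fun t : ℝ =>
      ((t ^ m * |t| ^ (2 * μ1) * (1 - t) ^ (μ2 - μ1 - 1) * (1 + t) ^ (μ2 - μ1) : ℝ) : ℂ) *
        (b - a * (t : ℂ) ^ (d + 1)) ^ i)
      = fun t : ℝ => ∑ k ∈ Finset.range (i + 1),
            ((t ^ (n - k * (d+1)) * |t| ^ (2 * μ1) * (1 - t) ^ (μ2 - μ1 - 1) *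
                (1 + t) ^ (μ2 - μ1) : ℝ) : ℂ) *
              (b ^ k * (-a) ^ (i - k) * (Nat.choose i k : ℂ)) := funext expand
  rw [hfun, intervalIntegral.integral_finset_sum
    (fun k _ => (hint (n - k * (d+1))).mul_const _)]
  -- evaluate each integral
  have heval : ∀ k : ℕ,
      (∫ t in (-1:ℝ)..1,
        ((t ^ (n - k * (d+1)) * |t| ^ (2 * μ1) * (1 - t) ^ (μ2 - μ1 - 1) *
            (1 + t) ^ (μ2 - μ1) : ℝ) : ℂ) *
          (b ^ k * (-a) ^ (i - k) * (Nat.choose i k : ℂ)))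
      = ((realBeta (μ1 + 1/2) (μ2-μ1) *
          (dunklGamma μ1 (n - k*(d+1)) / dunklGamma μ2 (n - k*(d+1))) : ℝ) : ℂ) *
        (b ^ k * (-a) ^ (i - k) * (Nat.choose i k : ℂ)) := by
    intro k
    rw [intervalIntegral.integral_mul_const, intervalIntegral.integral_ofReal,
      int_F_eval h1 h2]
  simp only [heval]
  -- now a finite-sum identity
  rw [Finset.mul_sum, Finset.mul_sum]
  refine Finset.sum_congr rfl fun k hk => ?_
  have hk' : k ≤ i := Nat.lt_succ_iff.mp (Finset.mem_range.mp hk)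
  have hβ : ((realBeta (μ1 + 1/2) (μ2 - μ1) : ℝ) : ℂ) ≠ 0 := by
    exact_mod_cast (realBeta_pos (by linarith) (by linarith)).ne'
  have hm0 : (Nat.factorial m : ℂ) ≠ 0 := by exact_mod_cast (Nat.factorial_pos m).ne'
  have hi0 : (Nat.factorial i : ℂ) ≠ 0 := by exact_mod_cast (Nat.factorial_pos i).ne'
  have hk0 : (Nat.factorial k : ℂ) ≠ 0 := by exact_mod_cast (Nat.factorial_pos k).ne'
  have hik0 : (Nat.factorial (i-k) : ℂ) ≠ 0 := by
    exact_mod_cast (Nat.factorial_pos (i-k)).ne'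
  have hchoose : (Nat.choose i k : ℂ) * (Nat.factorial k : ℂ) * (Nat.factorial (i-k) : ℂ)
      = (Nat.factorial i : ℂ) := by
    exact_mod_cast congrArg (Nat.cast : ℕ → ℂ) (Nat.choose_mul_factorial_mul_factorial hk')
  have hγ2 : ((dunklGamma μ2 (n - k*(d+1)) : ℝ) : ℂ) ≠ 0 :=
    Complex.ofReal_ne_zero.mpr (dunklGamma_pos_s16 (by linarith) _).ne'
  push_cast
  have hβ' : ((realBeta ((μ1*2+1)/2) (μ2-μ1) : ℝ) : ℂ) ≠ 0 := by
    rw [show (μ1*2+1)/2 = μ1 + 1/2 by ring]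
    exact_mod_cast hβ
  field_simp
  linear_combination (-(Nat.factorial n : ℂ) * ((dunklGamma μ1 (n - k * (d + 1)) : ℝ) : ℂ) *
    a ^ (i - k) * ((-1 : ℂ)) ^ (i - k) *
    b ^ k) * hchoose

end Aux
end
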